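/- arXiv:0810.5571 — 4 statements merged into one kernel-verified Lean document; each statement's English description precedes it below -/
import Mathlib

section
/- Let f be a rational map of degree d ≥ 2 and let E be a finite subset of the Riemann sphere such that every preimage of a point of E is either a point of E or a critical point of f. Then E has at most 4 elements. -/
open Polynomial Filter Set Topology OnePoint

noncomputable section

/-- The map of the Riemann sphere `OnePoint ℂ` induced by the rational function `P/Q`. -/
noncomputable def ratApply (P Q : Polynomial ℂ) : OnePoint ℂ → OnePoint ℂ := fun w =>
  match w with
  | ∞ =>
      if Q.degree < P.degree then ∞
      else if P.degree < Q.degree then ((0 : ℂ) : OnePoint ℂ)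
      else ((P.leadingCoeff / Q.leadingCoeff : ℂ) : OnePoint ℂ)
  | (z : ℂ) => if Q.eval z = 0 then ∞ else ((P.eval z / Q.eval z : ℂ) : OnePoint ℂ)

/-- `f` has local degree `n` at `a`: small neighborhoods of `a` cover nearby values `n` times. -/
def IsLocalDeg (f : OnePoint ℂ → OnePoint ℂ) (a : OnePoint ℂ) (n : ℕ) : Prop :=
  ∀ U ∈ 𝓝 a, ∃ V ∈ 𝓝 a, V ⊆ U ∧ ∀ᶠ w in 𝓝[≠] (f a), (V ∩ f ⁻¹' {w}).ncard = n

/-- A rational map of degree `d`, given by a pair of coprime polynomials. -/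
structure RatMap (d : ℕ) where
  P : Polynomial ℂ
  Q : Polynomial ℂ
  coprime : IsCoprime P Q
  deg : max P.natDegree Q.natDegree = d

/-- The induced self-map of the Riemann sphere. -/
noncomputable def RatMap.toFun {d : ℕ} (F : RatMap d) : OnePoint ℂ → OnePoint ℂ :=
  ratApply F.P F.Q

/-- The set of critical points: points of local degree at least `2`. -/
def critSet (f : OnePoint ℂ → OnePoint ℂ) : Set (OnePoint ℂ) :=
  {a | ∃ n, 2 ≤ n ∧ IsLocalDeg f a n}

end


noncomputable section

set_option linter.unusedSectionVars false
set_option maxHeartbeats 1000000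

/-- Wronskian of two polynomials. -/
def wron (P Q : Polynomial ℂ) : Polynomial ℂ := P.derivative * Q - P * Q.derivative

lemma wron_anti (P Q : Polynomial ℂ) : wron P Q = -(wron Q P) := by
  simp [wron]; ring

lemma wron_sub (P Q : Polynomial ℂ) (w : ℂ) : wron (P - C w * Q) Q = wron P Q := by
  simp only [wron, derivative_sub, derivative_C_mul]
  ring

lemma wron_natDegree_le {A B : Polynomial ℂ} {a b : ℕ} (hA : A.natDegree ≤ a)
    (hB : B.natDegree ≤ b) : (wron A B).natDegree ≤ a + b - 1 := by
  refine (natDegree_sub_le _ _).trans (max_le ?_ ?_)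
  · rcases Nat.eq_zero_or_pos a with ha | ha
    · have h0 : A.natDegree = 0 := by omega
      rcases natDegree_eq_zero.mp h0 with ⟨c, rfl⟩
      simp
    · refine (natDegree_mul_le).trans ?_
      have := A.natDegree_derivative_le
      omega
  · rcases Nat.eq_zero_or_pos b with hb | hb
    · have h0 : B.natDegree = 0 := by omega
      rcases natDegree_eq_zero.mp h0 with ⟨c, rfl⟩
      simp
    · refine (natDegree_mul_le).trans ?_
      have := B.natDegree_derivative_le
      omega

end

section Basic

variable {d : ℕ} {P Q : Polynomial ℂ} (hcop : IsCoprime P Q)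
  (hdeg : max P.natDegree Q.natDegree = d) (hd : 2 ≤ d)

/-- The polynomial whose roots are the finite preimages of `z`. -/
noncomputable def fiberPoly (P Q : Polynomial ℂ) : OnePoint ℂ → Polynomial ℂ := fun z =>
  z.elim Q (fun w => P - C w * Q)

lemma fiberPoly_infty : fiberPoly P Q ∞ = Q := rfl
lemma fiberPoly_coe (w : ℂ) : fiberPoly P Q (w : OnePoint ℂ) = P - C w * Q := rfl

include hcop hdeg hd

lemma hP0 : P ≠ 0 := by
  rintro rfl
  have hu := (isCoprime_zero_left.mp hcop)
  have := natDegree_eq_zero_of_isUnit hu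
  simp [this] at hdeg; omega

lemma hQ0 : Q ≠ 0 := by
  rintro rfl
  have hu := (isCoprime_zero_right.mp hcop)
  have := natDegree_eq_zero_of_isUnit hu
  simp [this] at hdeg; omega

lemma no_common_root (a : ℂ) (hp : P.eval a = 0) (hq : Q.eval a = 0) : False := by
  obtain ⟨u, v, huv⟩ := hcop
  have := congrArg (Polynomial.eval a) huv
  simp [hp, hq] at this

lemma fiberPoly_ne_zero (z : OnePoint ℂ) : fiberPoly P Q z ≠ 0 := by
  induction z using OnePoint.rec with
  | infty => exact hQ0 hcop hdeg hd
  | coe w =>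
    rw [fiberPoly_coe]
    intro h
    have hPw : P = C w * Q := by linear_combination (norm := ring_nf) h
    have hu : IsUnit Q := by
      obtain ⟨u, v, huv⟩ := hcop
      rw [hPw] at huv
      exact IsUnit.of_mul_eq_one (a := Q) (u * C w + v) (by linear_combination (norm := ring_nf) huv)
    have h1 := natDegree_eq_zero_of_isUnit hu
    have h2 : P.natDegree ≤ Q.natDegree := hPw ▸ (natDegree_C_mul_le w Q)
    omega

lemma fiberPoly_natDegree_le (z : OnePoint ℂ) : (fiberPoly P Q z).natDegree ≤ d := by
  induction z using OnePoint.rec with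
  | infty => rw [fiberPoly_infty]; omega
  | coe w =>
    rw [fiberPoly_coe]
    refine (natDegree_sub_le _ _).trans (max_le (by omega) ((natDegree_C_mul_le w Q).trans (by omega)))

lemma wron_ne_zero : wron P Q ≠ 0 := by
  intro h
  have h1 : P.derivative * Q = P * Q.derivative := by
    have := sub_eq_zero.mp h; exact this
  have hp0 := hP0 hcop hdeg hd
  have hq0 := hQ0 hcop hdeg hd
  have hPd : P ∣ P.derivative * Q := ⟨Q.derivative, h1⟩
  have hP' : P ∣ P.derivative := (hcop.dvd_of_dvd_mul_right hPd)
  have hQd : Q ∣ P * Q.derivative := ⟨P.derivative, by linear_combination -h1⟩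
  have hQ' : Q ∣ Q.derivative := (hcop.symm.dvd_of_dvd_mul_right (by rwa [mul_comm] at hQd))
  have hP'0 : P.derivative = 0 := by
    by_contra hne
    have := Polynomial.natDegree_le_of_dvd hP' hne
    have := P.natDegree_derivative_le
    have : P.natDegree = 0 := by omega
    simp [derivative_of_natDegree_zero this] at hne
  have hQ'0 : Q.derivative = 0 := by
    by_contra hne
    have := Polynomial.natDegree_le_of_dvd hQ' hne
    have := Q.natDegree_derivative_le
    have : Q.natDegree = 0 := by omega
    simp [derivative_of_natDegree_zero this] at hne
  have h3 := natDegree_eq_zero_of_derivative_eq_zero hP'0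
  have h4 := natDegree_eq_zero_of_derivative_eq_zero hQ'0
  omega

lemma wron_natDegree_le_main : (wron P Q).natDegree ≤ 2 * d - 2 := by
  rcases eq_or_ne Q.natDegree d with hQd | hQd
  · -- subtract a multiple of Q from P to lower the degree
    set c := P.coeff d / Q.coeff d with hc
    have hQc : Q.coeff d ≠ 0 := by
      rw [← hQd, ← leadingCoeff]
      exact leadingCoeff_ne_zero.mpr (hQ0 hcop hdeg hd)
    have hR : (P - C c * Q).natDegree ≤ d - 1 := by
      rw [natDegree_le_iff_coeff_eq_zero]
      intro m hm
      rcases eq_or_lt_of_le (show d ≤ m by omega) with rfl | hlt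
      · simp only [coeff_sub, coeff_C_mul]
        rw [hc]; field_simp; ring
      · have h1 : P.coeff m = 0 := coeff_eq_zero_of_natDegree_lt (by omega)
        have h2 : Q.coeff m = 0 := coeff_eq_zero_of_natDegree_lt (by omega)
        simp [coeff_sub, coeff_C_mul, h1, h2]
    calc (wron P Q).natDegree = (wron (P - C c * Q) Q).natDegree := by rw [wron_sub]
      _ ≤ (d - 1) + d - 1 := wron_natDegree_le hR (by omega)
      _ ≤ 2 * d - 2 := by omega
  · have hPd : P.natDegree = d := by omega
    have hQd' : Q.natDegree ≤ d - 1 := by omega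
    rw [wron_anti, natDegree_neg]
    calc (wron Q P).natDegree ≤ (d - 1) + d - 1 := wron_natDegree_le hQd' (by omega)
      _ ≤ 2 * d - 2 := by omega

lemma wron_natDegree_le_fiber (z : OnePoint ℂ) :
    (wron P Q).natDegree ≤ (fiberPoly P Q z).natDegree + d - 1 := by
  induction z using OnePoint.rec with
  | infty =>
    rw [fiberPoly_infty, wron_anti, natDegree_neg]
    exact wron_natDegree_le le_rfl (by omega)
  | coe w =>
    rw [fiberPoly_coe, ← wron_sub P Q w]
    exact wron_natDegree_le le_rfl (by omega)

lemma rootMult_wron_le (z : OnePoint ℂ) (a : ℂ) :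
    rootMultiplicity a (fiberPoly P Q z) - 1 ≤ rootMultiplicity a (wron P Q) := by
  set R := fiberPoly P Q z with hRdef
  set m := rootMultiplicity a R with hm
  rcases le_or_gt m 1 with h1 | h1
  · omega
  have hdvd : (X - C a) ^ m ∣ R := pow_rootMultiplicity_dvd R a
  obtain ⟨S, hS⟩ := hdvd
  have hdR : (X - C a) ^ (m - 1) ∣ R.derivative := by
    rw [hS, derivative_mul, derivative_pow]
    exact dvd_add (((dvd_mul_left _ _).mul_right _).mul_right _)
      ((pow_dvd_pow _ (by omega)).mul_right _)
  have hdR0 : (X - C a) ^ (m - 1) ∣ R := (pow_dvd_pow _ (by omega)).trans ⟨S, hS⟩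
  have key : ∀ T : Polynomial ℂ, (X - C a) ^ (m - 1) ∣ wron R T := by
    intro T
    exact dvd_sub (hdR.mul_right T) (hdR0.mul_right T.derivative)
  have hw : (X - C a) ^ (m - 1) ∣ wron P Q := by
    induction z using OnePoint.rec with
    | infty =>
      rw [wron_anti]
      exact Dvd.dvd.neg_right (key P)
    | coe w =>
      rw [← wron_sub P Q w]
      exact key Q
  rw [Polynomial.le_rootMultiplicity_iff (wron_ne_zero hcop hdeg hd)]
  exact hw

end Basic

lemma ratApply_coe (P Q : Polynomial ℂ) (z : ℂ) :
    ratApply P Q (z : OnePoint ℂ) =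
      if Q.eval z = 0 then ∞ else ((P.eval z / Q.eval z : ℂ) : OnePoint ℂ) := rfl

lemma ratApply_infty (P Q : Polynomial ℂ) :
    ratApply P Q ∞ =
      if Q.degree < P.degree then ∞
      else if P.degree < Q.degree then ((0 : ℂ) : OnePoint ℂ)
      else ((P.leadingCoeff / Q.leadingCoeff : ℂ) : OnePoint ℂ) := rfl


section Fiber

variable {d : ℕ} {P Q : Polynomial ℂ} (hcop : IsCoprime P Q)
  (hdeg : max P.natDegree Q.natDegree = d) (hd : 2 ≤ d)

include hcop hdeg hd

lemma ratApply_coe_eq_iff (z : OnePoint ℂ) (a : ℂ) :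
    ratApply P Q (a : OnePoint ℂ) = z ↔ (fiberPoly P Q z).IsRoot a := by
  induction z using OnePoint.rec with
  | infty =>
    rw [ratApply_coe, fiberPoly_infty, IsRoot.def]
    constructor
    · intro h
      by_contra hq
      rw [if_neg hq] at h
      exact (coe_ne_infty _) h
    · intro h; rw [if_pos h]
  | coe w =>
    rw [ratApply_coe, fiberPoly_coe, IsRoot.def]
    constructor
    · intro h
      rcases eq_or_ne (Q.eval a) 0 with hq | hq
      · rw [if_pos hq] at h; exact absurd h.symm (coe_ne_infty _)
      · rw [if_neg hq, coe_eq_coe] at h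
        simp only [eval_sub, eval_mul, eval_C]
        field_simp at h
        linear_combination h
    · intro h
      simp only [eval_sub, eval_mul, eval_C] at h
      have hq : Q.eval a ≠ 0 := by
        intro hq0
        exact no_common_root hcop hdeg hd a (by linear_combination h + w * hq0) hq0
      rw [if_neg hq, coe_eq_coe]
      field_simp
      linear_combination h

lemma fiberPoly_natDegree_lt_iff (z : OnePoint ℂ) :
    (fiberPoly P Q z).natDegree < d ↔ (fiberPoly P Q z).coeff d = 0 := by
  constructor
  · exact fun h => coeff_eq_zero_of_natDegree_lt h
  · intro h
    rcases lt_or_eq_of_le (fiberPoly_natDegree_le hcop hdeg hd z) with h' | h'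
    · exact h'
    · exfalso
      have := leadingCoeff_ne_zero.mpr (fiberPoly_ne_zero hcop hdeg hd z)
      rw [leadingCoeff, h'] at this
      exact this h

lemma ratApply_infty_eq_iff (z : OnePoint ℂ) :
    ratApply P Q ∞ = z ↔ (fiberPoly P Q z).natDegree < d := by
  have hp0 := hP0 hcop hdeg hd
  have hq0 := hQ0 hcop hdeg hd
  rw [ratApply_infty, fiberPoly_natDegree_lt_iff hcop hdeg hd]
  induction z using OnePoint.rec with
  | infty =>
    rw [fiberPoly_infty]
    constructor
    · intro h
      by_contra hc
      have hQd : Q.natDegree = d := by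
        have := fiberPoly_natDegree_le hcop hdeg hd ∞
        rw [fiberPoly_infty] at this
        rcases lt_or_eq_of_le this with h' | h'
        · exact absurd (coeff_eq_zero_of_natDegree_lt h') hc
        · exact h'
      have hnotlt : ¬ Q.degree < P.degree := by
        rw [← natDegree_lt_natDegree_iff hq0]
        omega
      rw [if_neg hnotlt] at h
      split at h <;> exact (coe_ne_infty _) h
    · intro h
      have hQd : Q.natDegree < d := by
        rcases lt_or_eq_of_le (show Q.natDegree ≤ d by omega) with h' | h'
        · exact h'
        · exfalso
          rw [← h', ← leadingCoeff] at h
          exact leadingCoeff_ne_zero.mpr hq0 h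
      have : Q.degree < P.degree := degree_lt_degree (by omega)
      rw [if_pos this]
  | coe w =>
    rw [fiberPoly_coe]
    have hcoeff : (P - C w * Q).coeff d = P.coeff d - w * Q.coeff d := by
      simp [coeff_sub, coeff_C_mul]
    rw [hcoeff]
    rcases eq_or_ne Q.natDegree d with hQd | hQd
    · have hQc : Q.coeff d ≠ 0 := by
        rw [← hQd, ← leadingCoeff]; exact leadingCoeff_ne_zero.mpr hq0
      have hnotlt : ¬ Q.degree < P.degree := by
        rw [← natDegree_lt_natDegree_iff hq0]; omega
      rw [if_neg hnotlt]
      rcases eq_or_ne P.natDegree d with hPd | hPd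
      · have hPc : P.coeff d ≠ 0 := by
          rw [← hPd, ← leadingCoeff]; exact leadingCoeff_ne_zero.mpr hp0
        have hnotlt' : ¬ P.degree < Q.degree := by
          rw [← natDegree_lt_natDegree_iff hp0]; omega
        rw [if_neg hnotlt', coe_eq_coe, leadingCoeff, leadingCoeff, hPd, hQd,
          div_eq_iff hQc, sub_eq_zero]
      · have hPc : P.coeff d = 0 := coeff_eq_zero_of_natDegree_lt (by omega)
        have hlt : P.degree < Q.degree := degree_lt_degree (by omega)
        rw [if_pos hlt, coe_eq_coe, hPc, zero_sub, neg_eq_zero]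
        constructor
        · intro h; rw [← h, zero_mul]
        · intro h
          rcases mul_eq_zero.mp h with h' | h'
          · exact h'.symm
          · exact absurd h' hQc
    · have hQc : Q.coeff d = 0 := coeff_eq_zero_of_natDegree_lt (by omega)
      have hPd : P.natDegree = d := by omega
      have hPc : P.coeff d ≠ 0 := by
        rw [← hPd, ← leadingCoeff]; exact leadingCoeff_ne_zero.mpr hp0
      have hlt : Q.degree < P.degree := degree_lt_degree (by omega)
      rw [if_pos hlt]
      constructor
      · intro h; exact absurd h.symm (coe_ne_infty _)
      · intro h
        exfalso
        rw [hQc] at h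
        exact hPc (by linear_combination h)

lemma fiber_eq (z : OnePoint ℂ) :
    ratApply P Q ⁻¹' {z} =
      ((↑) '' {a : ℂ | (fiberPoly P Q z).IsRoot a}) ∪
        (if (fiberPoly P Q z).natDegree < d then {∞} else ∅) := by
  ext x
  induction x using OnePoint.rec with
  | infty =>
    simp only [Set.mem_preimage, Set.mem_singleton_iff, Set.mem_union]
    rw [ratApply_infty_eq_iff hcop hdeg hd]
    constructor
    · intro h
      right; rw [if_pos h]; rfl
    · rintro (⟨a, _, ha⟩ | h)
      · exact absurd ha (coe_ne_infty _)
      · split at h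
        · assumption
        · exact absurd h (Set.notMem_empty _)
  | coe a =>
    simp only [Set.mem_preimage, Set.mem_singleton_iff, Set.mem_union]
    rw [ratApply_coe_eq_iff hcop hdeg hd]
    constructor
    · intro h
      exact Or.inl ⟨a, h, rfl⟩
    · rintro (⟨b, hb, hba⟩ | h)
      · rwa [← coe_eq_coe.mp hba]
      · exfalso; split at h
        · exact (coe_ne_infty a) (Set.mem_singleton_iff.mp h)
        · exact Set.notMem_empty _ h

lemma fiber_finite (z : OnePoint ℂ) : (ratApply P Q ⁻¹' {z}).Finite := by
  rw [fiber_eq hcop hdeg hd]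
  refine Set.Finite.union (Set.Finite.image _ ?_) ?_
  · exact Polynomial.finite_setOf_isRoot (fiberPoly_ne_zero hcop hdeg hd z)
  · split <;> simp

end Fiber

section CritGeneral

/-- `f` has local degree `n` at `a`: small neighborhoods of `a` cover nearby values `n` times. -/
lemma not_injOn_of_crit {f : OnePoint ℂ → OnePoint ℂ} {a : OnePoint ℂ}
    (ha : a ∈ critSet f) : ∀ U ∈ 𝓝 a, ¬ Set.InjOn f U := by
  obtain ⟨n, hn2, hloc⟩ := ha
  intro U hU hinj
  obtain ⟨V, hV, hVU, hev⟩ := hloc U hU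
  have : (𝓝[≠] (f a)).NeBot := by infer_instance
  obtain ⟨w, hw⟩ := hev.exists
  set s := V ∩ f ⁻¹' {w} with hs
  have hfin : s.Finite := by
    by_contra hinf
    rw [Set.Infinite.ncard hinf] at hw
    omega
  have h2 : 1 < s.ncard := by omega
  obtain ⟨x, y, hx, hy, hxy⟩ := (Set.one_lt_ncard_iff hfin).mp h2
  exact hxy (hinj (hVU hx.1) (hVU hy.1) (by
    rw [hs, Set.mem_inter_iff, Set.mem_preimage, Set.mem_singleton_iff] at hx hy
    rw [hx.2, hy.2]))

lemma exists_injOn_of_hasStrictDerivAt {g : ℂ → ℂ} {a c : ℂ}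
    (h : HasStrictDerivAt g c a) (hc : c ≠ 0) : ∃ s ∈ 𝓝 a, Set.InjOn g s := by
  have hf := h.hasStrictFDerivAt_equiv hc
  exact ⟨(hf.toOpenPartialHomeomorph g).source,
    (hf.toOpenPartialHomeomorph g).open_source.mem_nhds hf.mem_toOpenPartialHomeomorph_source,
    (hf.toOpenPartialHomeomorph g).injOn⟩

lemma hasStrictDerivAt_ratio (P Q : Polynomial ℂ) {a : ℂ} (hb : Q.eval a ≠ 0) :
    HasStrictDerivAt (fun x => P.eval x / Q.eval x)
      ((wron P Q).eval a / (Q.eval a) ^ 2) a := by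
  have := (P.hasStrictDerivAt a).div (Q.hasStrictDerivAt a) hb
  simpa [wron, eval_sub, eval_mul, sq, Pi.div_def] using this

end CritGeneral

section CritFinite

variable {d : ℕ} {P Q : Polynomial ℂ} (hcop : IsCoprime P Q)
  (hdeg : max P.natDegree Q.natDegree = d) (hd : 2 ≤ d)

include hcop hdeg hd

lemma injOn_near_coe (a : ℂ) (hW : (wron P Q).eval a ≠ 0) :
    ∃ U ∈ 𝓝 ((a : ℂ) : OnePoint ℂ), Set.InjOn (ratApply P Q) U := by
  rcases eq_or_ne (Q.eval a) 0 with hq | hq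
  · -- pole
    have hp : P.eval a ≠ 0 := fun h => no_common_root hcop hdeg hd a h hq
    have hW' : (wron Q P).eval a / (P.eval a) ^ 2 ≠ 0 := by
      rw [wron_anti, eval_neg]
      exact div_ne_zero (neg_ne_zero.mpr hW) (pow_ne_zero 2 hp)
    obtain ⟨s, hs, hinj⟩ := exists_injOn_of_hasStrictDerivAt (hasStrictDerivAt_ratio Q P hp) hW'
    have hopen : IsOpen {x : ℂ | P.eval x ≠ 0} :=
      isOpen_compl_iff.mpr (isClosed_singleton.preimage P.continuous)
    refine ⟨(↑) '' (s ∩ {x | P.eval x ≠ 0}), ?_, ?_⟩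
    · rw [OnePoint.nhds_coe_eq]
      exact Filter.image_mem_map (Filter.inter_mem hs (hopen.mem_nhds hp))
    · rintro x ⟨u, hu, rfl⟩ y ⟨v, hv, rfl⟩ hf
      suffices h : u = v by rw [h]
      apply hinj hu.1 hv.1
      rw [ratApply_coe, ratApply_coe] at hf
      rcases eq_or_ne (Q.eval u) 0 with hqu | hqu <;> rcases eq_or_ne (Q.eval v) 0 with hqv | hqv
      · simp [hqu, hqv]
      · rw [if_pos hqu, if_neg hqv] at hf
        exact absurd hf.symm (coe_ne_infty _)
      · rw [if_neg hqu, if_pos hqv] at hf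
        exact absurd hf (coe_ne_infty _)
      · rw [if_neg hqu, if_neg hqv, coe_eq_coe] at hf
        have hpu : P.eval u ≠ 0 := hu.2
        have hpv : P.eval v ≠ 0 := hv.2
        field_simp at hf ⊢
        linear_combination -hf
  · -- regular point
    have hW' : (wron P Q).eval a / (Q.eval a) ^ 2 ≠ 0 := div_ne_zero hW (pow_ne_zero 2 hq)
    obtain ⟨s, hs, hinj⟩ := exists_injOn_of_hasStrictDerivAt (hasStrictDerivAt_ratio P Q hq) hW'
    have hopen : IsOpen {x : ℂ | Q.eval x ≠ 0} :=
      isOpen_compl_iff.mpr (isClosed_singleton.preimage Q.continuous)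
    refine ⟨(↑) '' (s ∩ {x | Q.eval x ≠ 0}), ?_, ?_⟩
    · rw [OnePoint.nhds_coe_eq]
      exact Filter.image_mem_map (Filter.inter_mem hs (hopen.mem_nhds hq))
    · rintro x ⟨u, hu, rfl⟩ y ⟨v, hv, rfl⟩ hf
      suffices h : u = v by rw [h]
      apply hinj hu.1 hv.1
      rw [ratApply_coe, if_neg hu.2, ratApply_coe, if_neg hv.2, coe_eq_coe] at hf
      simpa using hf

end CritFinite

section Rev

/-- The degree-`n` reversal of a polynomial. -/
noncomputable def revP (n : ℕ) (p : Polynomial ℂ) : Polynomial ℂ :=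
  ∑ i ∈ Finset.range (n + 1), C (p.coeff (n - i)) * X ^ i

lemma revP_eval_zero (n : ℕ) (p : Polynomial ℂ) : (revP n p).eval 0 = p.coeff n := by
  rw [revP, eval_finset_sum, Finset.sum_eq_single 0]
  · simp
  · intro b _ hb
    simp [zero_pow hb]
  · intro h
    exact absurd (Finset.mem_range.mpr (by omega)) h

lemma revP_eval {n : ℕ} {p : Polynomial ℂ} (hp : p.natDegree ≤ n) {x : ℂ} (hx : x ≠ 0) :
    (revP n p).eval x = x ^ n * p.eval x⁻¹ := by
  rw [revP, eval_finset_sum]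
  have hev : p.eval x⁻¹ = ∑ i ∈ Finset.range (n + 1), p.coeff i * x⁻¹ ^ i :=
    eval_eq_sum_range' (by omega) _
  rw [hev, Finset.mul_sum]
  have hstep : ∀ j ∈ Finset.range (n + 1),
      x ^ n * (p.coeff j * x⁻¹ ^ j) = p.coeff j * x ^ (n - j) := by
    intro j hj
    rw [Finset.mem_range] at hj
    rw [pow_sub₀ x hx (by omega : j ≤ n), inv_pow]
    ring
  rw [Finset.sum_congr rfl hstep, ← Finset.sum_range_reflect]
  refine Finset.sum_congr rfl fun i hi => ?_
  rw [Finset.mem_range] at hi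
  have h1 : n + 1 - 1 - i = n - i := by omega
  have h2 : n - (n - i) = i := by omega
  rw [h1, h2, eval_mul, eval_C, eval_pow, eval_X]

lemma revP_derivative_eval {n : ℕ} {p : Polynomial ℂ} (hn : 2 ≤ n) (hp : p.natDegree ≤ n)
    {x : ℂ} (hx : x ≠ 0) :
    (revP n p).derivative.eval x =
      n * x ^ (n - 1) * p.eval x⁻¹ - x ^ (n - 2) * p.derivative.eval x⁻¹ := by
  have h1 : HasDerivAt (fun y => (revP n p).eval y) ((revP n p).derivative.eval x) x :=
    (revP n p).hasDerivAt x
  have hinv : HasDerivAt (fun y : ℂ => y⁻¹) (-(x ^ 2)⁻¹) x := hasDerivAt_inv hx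
  have hcomp : HasDerivAt (fun y : ℂ => p.eval y⁻¹)
      (p.derivative.eval x⁻¹ * -(x ^ 2)⁻¹) x := by
    have := (p.hasDerivAt (x⁻¹)).comp x hinv
    simpa [Function.comp_def] using this
  have h2 : HasDerivAt (fun y : ℂ => y ^ n * p.eval y⁻¹)
      (n * x ^ (n - 1) * p.eval x⁻¹ + x ^ n * (p.derivative.eval x⁻¹ * -(x ^ 2)⁻¹)) x :=
    (hasDerivAt_pow n x).mul hcomp
  have heq : (fun y => (revP n p).eval y) =ᶠ[𝓝 x] fun y : ℂ => y ^ n * p.eval y⁻¹ := by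
    filter_upwards [isOpen_compl_singleton.mem_nhds hx] with y hy
    exact revP_eval hp hy
  have h3 := h2.congr_of_eventuallyEq heq
  rw [h1.unique h3]
  have hxx : x ^ n * (x ^ 2)⁻¹ = x ^ (n - 2) := by
    rw [pow_sub₀ x hx (by omega : 2 ≤ n)]
  ring_nf
  rw [← hxx]
  ring

lemma wron_revP_eval_zero {d : ℕ} {P Q : Polynomial ℂ} (hd : 2 ≤ d)
    (hP : P.natDegree ≤ d) (hQ : Q.natDegree ≤ d) (hW : (wron P Q).natDegree ≤ 2 * d - 2) :
    (wron (revP d P) (revP d Q)).eval 0 = -(wron P Q).coeff (2 * d - 2) := by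
  set A := wron (revP d P) (revP d Q) with hA
  set B := revP (2 * d - 2) (wron P Q) with hB
  have key : ∀ x : ℂ, x ≠ 0 → A.eval x = -B.eval x := by
    intro x hx
    rw [hA, hB, revP_eval hW hx]
    simp only [wron, eval_sub, eval_mul]
    rw [revP_eval hP hx, revP_eval hQ hx, revP_derivative_eval hd hP hx,
      revP_derivative_eval hd hQ hx]
    obtain ⟨e, rfl⟩ : ∃ e, d = e + 2 := ⟨d - 2, by omega⟩
    simp only [show e + 2 - 1 = e + 1 by omega, show e + 2 - 2 = e by omega,
      show 2 * (e + 2) - 2 = 2 * e + 2 by omega]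
    ring
  have hroots : {x : ℂ | (A + B).IsRoot x}.Infinite := by
    refine Set.Infinite.mono ?_ ((Set.finite_singleton (0 : ℂ)).infinite_compl)
    intro x hx
    have : x ≠ 0 := hx
    simp only [Set.mem_setOf_eq, IsRoot.def, eval_add, key x this]
    ring
  have hzero : A + B = 0 := Polynomial.eq_zero_of_infinite_isRoot _ hroots
  have hAB : A = -B := by linear_combination (norm := ring_nf) hzero
  rw [hAB, eval_neg, hB, revP_eval_zero]

end Rev

section CritInfty

lemma mem_nhds_infty_inv {t : Set ℂ} (ht : t ∈ 𝓝 (0 : ℂ)) :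
    ({∞} : Set (OnePoint ℂ)) ∪ (↑) '' {y : ℂ | y ≠ 0 ∧ y⁻¹ ∈ t} ∈ 𝓝 (∞ : OnePoint ℂ) := by
  obtain ⟨δ, hδ, hball⟩ := Metric.mem_nhds_iff.mp ht
  rw [(OnePoint.hasBasis_nhds_infty).mem_iff]
  refine ⟨Metric.closedBall 0 δ⁻¹, ⟨Metric.isClosed_closedBall, isCompact_closedBall _ _⟩, ?_⟩
  rintro x (⟨y, hy, rfl⟩ | hx)
  · right
    rw [Set.mem_compl_iff, Metric.mem_closedBall, Complex.dist_eq, sub_zero, not_le] at hy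
    have hy0 : y ≠ 0 := by
      intro h
      rw [h, norm_zero] at hy
      linarith [inv_pos.mpr hδ]
    refine ⟨y, ⟨hy0, hball ?_⟩, rfl⟩
    rw [Metric.mem_ball, Complex.dist_eq, sub_zero, norm_inv]
    rw [inv_lt_comm₀ (lt_trans (inv_pos.mpr hδ) hy) hδ]
    exact hy
  · left; exact hx

variable {d : ℕ} {P Q : Polynomial ℂ} (hcop : IsCoprime P Q)
  (hdeg : max P.natDegree Q.natDegree = d) (hd : 2 ≤ d)

include hcop hdeg hd

lemma injOn_near_infty (hWc : (wron P Q).coeff (2 * d - 2) ≠ 0) :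
    ∃ U ∈ 𝓝 (∞ : OnePoint ℂ), Set.InjOn (ratApply P Q) U := by
  have hp0 := hP0 hcop hdeg hd
  have hq0 := hQ0 hcop hdeg hd
  have hPled : P.natDegree ≤ d := by omega
  have hQled : Q.natDegree ≤ d := by omega
  have hW0 : (wron (revP d P) (revP d Q)).eval 0 = -(wron P Q).coeff (2 * d - 2) :=
    wron_revP_eval_zero hd hPled hQled (wron_natDegree_le_main hcop hdeg hd)
  have hrevP0 : (revP d P).eval 0 = P.coeff d := revP_eval_zero d P
  have hrevQ0 : (revP d Q).eval 0 = Q.coeff d := revP_eval_zero d Q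
  rcases eq_or_ne (Q.coeff d) 0 with hQc | hQc
  · -- `f ∞ = ∞` : use `g = revQ / revP`
    have hPc : P.coeff d ≠ 0 := by
      intro hPc
      have h1 : P.natDegree < d := by
        rcases lt_or_eq_of_le hPled with h | h
        · exact h
        · exfalso
          have hl := leadingCoeff_ne_zero.mpr hp0
          rw [leadingCoeff, h] at hl
          exact hl hPc
      have h2 : Q.natDegree < d := by
        rcases lt_or_eq_of_le hQled with h | h
        · exact h
        · exfalso
          have hl := leadingCoeff_ne_zero.mpr hq0
          rw [leadingCoeff, h] at hl
          exact hl hQc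
      omega
    have hder : (wron (revP d Q) (revP d P)).eval 0 / ((revP d P).eval 0) ^ 2 ≠ 0 := by
      rw [wron_anti, eval_neg, hW0, neg_neg, hrevP0]
      exact div_ne_zero hWc (pow_ne_zero 2 hPc)
    obtain ⟨s, hs, hinj⟩ := exists_injOn_of_hasStrictDerivAt
      (hasStrictDerivAt_ratio (revP d Q) (revP d P) (by rw [hrevP0]; exact hPc)) hder
    have hopen : IsOpen {x : ℂ | (revP d P).eval x ≠ 0} :=
      isOpen_compl_iff.mpr (isClosed_singleton.preimage (revP d P).continuous)
    set t := s ∩ {x : ℂ | (revP d P).eval x ≠ 0} with htdef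
    have ht : t ∈ 𝓝 (0 : ℂ) := Filter.inter_mem hs (hopen.mem_nhds (by rw [Set.mem_setOf_eq, hrevP0]; exact hPc))
    have h0t : (0 : ℂ) ∈ t := mem_of_mem_nhds ht
    set g : ℂ → ℂ := fun x => (revP d Q).eval x / (revP d P).eval x with hgdef
    have hg0 : g 0 = 0 := by
      rw [hgdef]; simp only; rw [hrevQ0, hrevP0, hQc, zero_div]
    -- relations for y with y⁻¹ ∈ t
    have hrel : ∀ y : ℂ, y ≠ 0 → y⁻¹ ∈ t →
        P.eval y ≠ 0 ∧ (Q.eval y = 0 ↔ (revP d Q).eval y⁻¹ = 0) ∧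
          (revP d Q).eval y⁻¹ = (y⁻¹) ^ d * Q.eval y ∧
          (revP d P).eval y⁻¹ = (y⁻¹) ^ d * P.eval y := by
      intro y hy hyt
      have hyi : y⁻¹ ≠ 0 := inv_ne_zero hy
      have e1 : (revP d P).eval y⁻¹ = (y⁻¹) ^ d * P.eval y := by
        rw [revP_eval hPled hyi, inv_inv]
      have e2 : (revP d Q).eval y⁻¹ = (y⁻¹) ^ d * Q.eval y := by
        rw [revP_eval hQled hyi, inv_inv]
      have hPne : P.eval y ≠ 0 := by
        intro h
        exact hyt.2 (by rw [e1, h, mul_zero])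
      refine ⟨hPne, ?_, e2, e1⟩
      rw [e2]
      constructor
      · intro h; rw [h, mul_zero]
      · intro h
        rcases mul_eq_zero.mp h with h' | h'
        · exact absurd h' (pow_ne_zero d hyi)
        · exact h'
    have hfinf : ratApply P Q ∞ = ∞ := by
      have hPd : P.natDegree = d := by
        rcases lt_or_eq_of_le hPled with h | h
        · exact absurd (coeff_eq_zero_of_natDegree_lt h) hPc
        · exact h
      have hQd : Q.natDegree < d := by
        rcases lt_or_eq_of_le hQled with h | h
        · exact h
        · exfalso
          have hl := leadingCoeff_ne_zero.mpr hq0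
          rw [leadingCoeff, h] at hl
          exact hl hQc
      rw [ratApply_infty, if_pos (degree_lt_degree (by omega))]
    refine ⟨({∞} : Set (OnePoint ℂ)) ∪ (↑) '' {y : ℂ | y ≠ 0 ∧ y⁻¹ ∈ t},
      mem_nhds_infty_inv ht, ?_⟩
    have hkey : ∀ y : ℂ, y ≠ 0 → y⁻¹ ∈ t → ratApply P Q (y : OnePoint ℂ) = ∞ → y⁻¹ = 0 := by
      intro y hy hyt hfy
      obtain ⟨hPne, hQiff, e2, e1⟩ := hrel y hy hyt
      rw [ratApply_coe] at hfy
      have hQy : Q.eval y = 0 := by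
        by_contra hQy
        rw [if_neg hQy] at hfy
        exact (coe_ne_infty _) hfy
      have : g y⁻¹ = 0 := by
        rw [hgdef]; simp only
        rw [hQiff.mp hQy, zero_div]
      exact hinj hyt.1 h0t.1 (by rw [this, hg0])
    rintro w1 (hw1 | ⟨y1, hy1, rfl⟩) w2 (hw2 | ⟨y2, hy2, rfl⟩) hf
    · rw [Set.mem_singleton_iff.mp hw1, Set.mem_singleton_iff.mp hw2]
    · rw [Set.mem_singleton_iff.mp hw1] at hf ⊢
      rw [hfinf] at hf
      exact absurd (hkey y2 hy2.1 hy2.2 hf.symm) (inv_ne_zero hy2.1)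
    · rw [Set.mem_singleton_iff.mp hw2] at hf ⊢
      rw [hfinf] at hf
      exact absurd (hkey y1 hy1.1 hy1.2 hf) (inv_ne_zero hy1.1)
    · -- both finite
      obtain ⟨hP1, hQ1iff, e21, e11⟩ := hrel y1 hy1.1 hy1.2
      obtain ⟨hP2, hQ2iff, e22, e12⟩ := hrel y2 hy2.1 hy2.2
      suffices h : y1⁻¹ = y2⁻¹ by
        rw [inv_inj] at h
        rw [h]
      apply hinj hy1.2.1 hy2.2.1
      rw [ratApply_coe, ratApply_coe] at hf
      rcases eq_or_ne (Q.eval y1) 0 with hq1 | hq1 <;> rcases eq_or_ne (Q.eval y2) 0 with hq2 | hq2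
      · rw [hgdef]; simp only
        rw [hQ1iff.mp hq1, hQ2iff.mp hq2, zero_div, zero_div]
      · rw [if_pos hq1, if_neg hq2] at hf
        exact absurd hf.symm (coe_ne_infty _)
      · rw [if_neg hq1, if_pos hq2] at hf
        exact absurd hf (coe_ne_infty _)
      · rw [if_neg hq1, if_neg hq2, coe_eq_coe] at hf
        rw [hgdef]; simp only
        rw [e21, e11, e22, e12]
        rw [mul_div_mul_left _ _ (pow_ne_zero d (inv_ne_zero hy1.1)),
          mul_div_mul_left _ _ (pow_ne_zero d (inv_ne_zero hy2.1))]
        field_simp at hf ⊢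
        linear_combination -hf
  · -- `f ∞` finite : use `h = revP / revQ`
    have hder : (wron (revP d P) (revP d Q)).eval 0 / ((revP d Q).eval 0) ^ 2 ≠ 0 := by
      rw [hW0, hrevQ0]
      exact div_ne_zero (neg_ne_zero.mpr hWc) (pow_ne_zero 2 hQc)
    obtain ⟨s, hs, hinj⟩ := exists_injOn_of_hasStrictDerivAt
      (hasStrictDerivAt_ratio (revP d P) (revP d Q) (by rw [hrevQ0]; exact hQc)) hder
    have hopen : IsOpen {x : ℂ | (revP d Q).eval x ≠ 0} :=
      isOpen_compl_iff.mpr (isClosed_singleton.preimage (revP d Q).continuous)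
    set t := s ∩ {x : ℂ | (revP d Q).eval x ≠ 0} with htdef
    have ht : t ∈ 𝓝 (0 : ℂ) := Filter.inter_mem hs (hopen.mem_nhds (by rw [Set.mem_setOf_eq, hrevQ0]; exact hQc))
    have h0t : (0 : ℂ) ∈ t := mem_of_mem_nhds ht
    set g : ℂ → ℂ := fun x => (revP d P).eval x / (revP d Q).eval x with hgdef
    have hval : ∀ y : ℂ, y ≠ 0 → y⁻¹ ∈ t →
        ratApply P Q (y : OnePoint ℂ) = ((g y⁻¹ : ℂ) : OnePoint ℂ) := by
      intro y hy hyt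
      have hyi : y⁻¹ ≠ 0 := inv_ne_zero hy
      have e1 : (revP d P).eval y⁻¹ = (y⁻¹) ^ d * P.eval y := by
        rw [revP_eval hPled hyi, inv_inv]
      have e2 : (revP d Q).eval y⁻¹ = (y⁻¹) ^ d * Q.eval y := by
        rw [revP_eval hQled hyi, inv_inv]
      have hQy : Q.eval y ≠ 0 := by
        intro h
        exact hyt.2 (by rw [e2, h, mul_zero])
      rw [ratApply_coe, if_neg hQy, coe_eq_coe, hgdef]
      simp only
      rw [e1, e2, mul_div_mul_left _ _ (pow_ne_zero d hyi)]
    have hvalinf : ratApply P Q ∞ = ((g 0 : ℂ) : OnePoint ℂ) := by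
      have hQd : Q.natDegree = d := le_antisymm hQled (le_natDegree_of_ne_zero hQc)
      have hnotlt : ¬ Q.degree < P.degree := by
        rw [← natDegree_lt_natDegree_iff hq0]
        omega
      rw [ratApply_infty, if_neg hnotlt, hgdef]
      simp only
      rw [hrevP0, hrevQ0]
      rcases eq_or_ne P.natDegree d with hPd | hPd
      · have hPc : P.coeff d ≠ 0 := by
          rw [← hPd, ← leadingCoeff]; exact leadingCoeff_ne_zero.mpr hp0
        have hnotlt' : ¬ P.degree < Q.degree := by
          rw [← natDegree_lt_natDegree_iff hp0]; omega
        rw [if_neg hnotlt', coe_eq_coe, leadingCoeff, leadingCoeff, hPd, hQd]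
      · have hPc : P.coeff d = 0 := coeff_eq_zero_of_natDegree_lt (by omega)
        have hlt : P.degree < Q.degree := degree_lt_degree (by omega)
        rw [if_pos hlt, coe_eq_coe, hPc, zero_div]
    refine ⟨({∞} : Set (OnePoint ℂ)) ∪ (↑) '' {y : ℂ | y ≠ 0 ∧ y⁻¹ ∈ t},
      mem_nhds_infty_inv ht, ?_⟩
    rintro w1 (hw1 | ⟨y1, hy1, rfl⟩) w2 (hw2 | ⟨y2, hy2, rfl⟩) hf
    · rw [Set.mem_singleton_iff.mp hw1, Set.mem_singleton_iff.mp hw2]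
    · rw [Set.mem_singleton_iff.mp hw1] at hf ⊢
      rw [hvalinf, hval y2 hy2.1 hy2.2, coe_eq_coe] at hf
      have := hinj h0t.1 hy2.2.1 hf
      exact absurd this.symm (inv_ne_zero hy2.1)
    · rw [Set.mem_singleton_iff.mp hw2] at hf ⊢
      rw [hvalinf, hval y1 hy1.1 hy1.2, coe_eq_coe] at hf
      have := hinj hy1.2.1 h0t.1 hf
      exact absurd this (inv_ne_zero hy1.1)
    · rw [hval y1 hy1.1 hy1.2, hval y2 hy2.1 hy2.2, coe_eq_coe] at hf
      have := hinj hy1.2.1 hy2.2.1 hf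
      rw [inv_inj] at this
      rw [this]

end CritInfty

section CritBound

lemma sum_count_le_card (A : Finset ℂ) (M : Multiset ℂ) :
    ∑ a ∈ A, M.count a ≤ Multiset.card M := by
  classical
  have h1 : ∑ a ∈ A, M.count a = ∑ a ∈ A ∩ M.toFinset, M.count a := by
    refine (Finset.sum_subset Finset.inter_subset_left ?_).symm
    intro a haA hnin
    rw [Multiset.count_eq_zero]
    intro hmem
    exact hnin (Finset.mem_inter.mpr ⟨haA, Multiset.mem_toFinset.mpr hmem⟩)
  rw [h1]
  calc ∑ a ∈ A ∩ M.toFinset, M.count a ≤ ∑ a ∈ M.toFinset, M.count a :=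
        Finset.sum_le_sum_of_subset Finset.inter_subset_right
    _ = Multiset.card M := Multiset.toFinset_sum_count_eq M

lemma ncard_isRoot_le {W : Polynomial ℂ} (hW : W ≠ 0) :
    {a : ℂ | W.IsRoot a}.ncard ≤ W.natDegree := by
  classical
  have h : {a : ℂ | W.IsRoot a} = ↑W.roots.toFinset := by
    ext a
    simp [Multiset.mem_toFinset, mem_roots, hW]
  rw [h, Set.ncard_coe_finset]
  exact le_trans (Multiset.toFinset_card_le _) (W.card_roots')

variable {d : ℕ} {P Q : Polynomial ℂ} (hcop : IsCoprime P Q)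
  (hdeg : max P.natDegree Q.natDegree = d) (hd : 2 ≤ d)

include hcop hdeg hd

lemma critSet_subset :
    critSet (ratApply P Q) ⊆ ((↑) '' {a : ℂ | (wron P Q).IsRoot a}) ∪
      (if (wron P Q).coeff (2 * d - 2) = 0 then {∞} else ∅) := by
  intro a ha
  induction a using OnePoint.rec with
  | infty =>
    right
    rcases eq_or_ne ((wron P Q).coeff (2 * d - 2)) 0 with h | h
    · rw [if_pos h]; exact rfl
    · exfalso
      obtain ⟨U, hU, hinj⟩ := injOn_near_infty hcop hdeg hd h
      exact not_injOn_of_crit ha U hU hinj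
  | coe x =>
    left
    refine ⟨x, ?_, rfl⟩
    by_contra h
    obtain ⟨U, hU, hinj⟩ := injOn_near_coe hcop hdeg hd x h
    exact not_injOn_of_crit ha U hU hinj

lemma critSet_finite : (critSet (ratApply P Q)).Finite := by
  refine Set.Finite.subset ?_ (critSet_subset hcop hdeg hd)
  refine Set.Finite.union (Set.Finite.image _ ?_) ?_
  · exact Polynomial.finite_setOf_isRoot (wron_ne_zero hcop hdeg hd)
  · split <;> simp

lemma critSet_ncard_le : (critSet (ratApply P Q)).ncard ≤ 2 * d - 2 := by
  have hW0 := wron_ne_zero hcop hdeg hd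
  have hWroots := ncard_isRoot_le hW0
  have hWfin : {a : ℂ | (wron P Q).IsRoot a}.Finite := Polynomial.finite_setOf_isRoot hW0
  have hsub := critSet_subset hcop hdeg hd
  have hbigfin : (((↑) '' {a : ℂ | (wron P Q).IsRoot a}) ∪
      (if (wron P Q).coeff (2 * d - 2) = 0 then {∞} else ∅) : Set (OnePoint ℂ)).Finite := by
    refine Set.Finite.union (Set.Finite.image _ hWfin) ?_
    split <;> simp
  refine le_trans (Set.ncard_le_ncard hsub hbigfin) ?_
  refine le_trans (Set.ncard_union_le _ _) ?_
  have himg : (((↑) : ℂ → OnePoint ℂ) '' {a : ℂ | (wron P Q).IsRoot a}).ncard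
      = {a : ℂ | (wron P Q).IsRoot a}.ncard :=
    Set.ncard_image_of_injective _ OnePoint.coe_injective
  rcases eq_or_ne ((wron P Q).coeff (2 * d - 2)) 0 with h | h
  · have hdeglt : (wron P Q).natDegree ≤ 2 * d - 3 := by
      have h1 := wron_natDegree_le_main hcop hdeg hd
      have h2 : (wron P Q).natDegree ≠ 2 * d - 2 := by
        intro he
        have hl := leadingCoeff_ne_zero.mpr hW0
        rw [leadingCoeff, he] at hl
        exact hl h
      omega
    rw [if_pos h, himg, Set.ncard_singleton]
    omega
  · rw [if_neg h, himg, Set.ncard_empty]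
    have := wron_natDegree_le_main hcop hdeg hd
    omega

end CritBound

section Count

variable {d : ℕ} {P Q : Polynomial ℂ} (hcop : IsCoprime P Q)
  (hdeg : max P.natDegree Q.natDegree = d) (hd : 2 ≤ d)

include hcop hdeg hd

lemma fiber_ncard (z : OnePoint ℂ) :
    (ratApply P Q ⁻¹' {z}).ncard =
      (fiberPoly P Q z).roots.toFinset.card
        + (if (fiberPoly P Q z).natDegree < d then 1 else 0) := by
  classical
  rw [fiber_eq hcop hdeg hd z]
  have hroots : {a : ℂ | (fiberPoly P Q z).IsRoot a} = ↑(fiberPoly P Q z).roots.toFinset := by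
    ext a
    simp [Multiset.mem_toFinset, mem_roots, fiberPoly_ne_zero hcop hdeg hd z]
  have hdisj : Disjoint (((↑) : ℂ → OnePoint ℂ) '' {a : ℂ | (fiberPoly P Q z).IsRoot a})
      (if (fiberPoly P Q z).natDegree < d then ({∞} : Set (OnePoint ℂ)) else ∅) := by
    rw [Set.disjoint_right]
    intro x hx
    split at hx
    · rw [Set.mem_singleton_iff.mp hx]
      exact OnePoint.infty_notMem_image_coe
    · exact absurd hx (Set.notMem_empty x)
  rw [Set.ncard_union_eq hdisj (Set.Finite.image _ (Polynomial.finite_setOf_isRoot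
      (fiberPoly_ne_zero hcop hdeg hd z))) (by split <;> simp)]
  congr 1
  · rw [Set.ncard_image_of_injective _ OnePoint.coe_injective, hroots, Set.ncard_coe_finset]
  · split <;> simp

lemma fiber_ncard_add_excess (z : OnePoint ℂ) :
    (ratApply P Q ⁻¹' {z}).ncard
      + (((fiberPoly P Q z).natDegree - (fiberPoly P Q z).roots.toFinset.card)
        + (d - (fiberPoly P Q z).natDegree
            - (if (fiberPoly P Q z).natDegree < d then 1 else 0))) = d := by
  rw [fiber_ncard hcop hdeg hd z]
  have h1 : (fiberPoly P Q z).roots.toFinset.card ≤ (fiberPoly P Q z).natDegree :=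
    le_trans (Multiset.toFinset_card_le _) ((fiberPoly P Q z).card_roots')
  have h2 : (fiberPoly P Q z).natDegree ≤ d := fiberPoly_natDegree_le hcop hdeg hd z
  split <;> omega

lemma sum_excess_le (T : Finset (OnePoint ℂ)) :
    ∑ z ∈ T, (((fiberPoly P Q z).natDegree - (fiberPoly P Q z).roots.toFinset.card)
        + (d - (fiberPoly P Q z).natDegree
            - (if (fiberPoly P Q z).natDegree < d then 1 else 0))) ≤ 2 * d - 2 := by
  classical
  rw [Finset.sum_add_distrib]
  set W := wron P Q with hWdef
  have hW0 : W ≠ 0 := wron_ne_zero hcop hdeg hd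
  -- first part: total multiplicity excess of finite roots
  have hpart1 : ∑ z ∈ T, ((fiberPoly P Q z).natDegree - (fiberPoly P Q z).roots.toFinset.card)
      ≤ W.natDegree := by
    have hperz : ∀ z : OnePoint ℂ,
        (fiberPoly P Q z).natDegree - (fiberPoly P Q z).roots.toFinset.card
          ≤ ∑ a ∈ (fiberPoly P Q z).roots.toFinset, rootMultiplicity a W := by
      intro z
      set R := fiberPoly P Q z with hR
      have hR0 : R ≠ 0 := fiberPoly_ne_zero hcop hdeg hd z
      have hcard : R.natDegree = ∑ a ∈ R.roots.toFinset, rootMultiplicity a R := by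
        rw [← Polynomial.splits_iff_card_roots.mp (IsAlgClosed.splits R)]
        rw [← Multiset.toFinset_sum_count_eq]
        exact Finset.sum_congr rfl fun a _ => (count_roots R)
      have hcardset : R.roots.toFinset.card = ∑ a ∈ R.roots.toFinset, 1 := by
        simp
      have hmono : ∀ a ∈ R.roots.toFinset, 1 ≤ rootMultiplicity a R := by
        intro a ha
        rw [Multiset.mem_toFinset, mem_roots hR0] at ha
        exact (rootMultiplicity_pos hR0).mpr ha
      calc R.natDegree - R.roots.toFinset.card
          = ∑ a ∈ R.roots.toFinset, (rootMultiplicity a R - 1) := by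
            rw [Finset.sum_tsub_distrib _ hmono, ← hcard, ← hcardset]
        _ ≤ ∑ a ∈ R.roots.toFinset, rootMultiplicity a W := by
            refine Finset.sum_le_sum fun a ha => ?_
            exact rootMult_wron_le hcop hdeg hd z a
    refine le_trans (Finset.sum_le_sum fun z _ => hperz z) ?_
    have hdisj : ∀ z1 ∈ T, ∀ z2 ∈ T, z1 ≠ z2 →
        Disjoint ((fiberPoly P Q z1).roots.toFinset) ((fiberPoly P Q z2).roots.toFinset) := by
      intro z1 _ z2 _ hne
      rw [Finset.disjoint_left]
      intro a ha1 ha2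
      rw [Multiset.mem_toFinset, mem_roots (fiberPoly_ne_zero hcop hdeg hd z1)] at ha1
      rw [Multiset.mem_toFinset, mem_roots (fiberPoly_ne_zero hcop hdeg hd z2)] at ha2
      have h1 := (ratApply_coe_eq_iff hcop hdeg hd z1 a).mpr ha1
      have h2 := (ratApply_coe_eq_iff hcop hdeg hd z2 a).mpr ha2
      exact hne (h1 ▸ h2 ▸ rfl)
    rw [← Finset.sum_biUnion hdisj]
    calc ∑ a ∈ T.biUnion (fun z => (fiberPoly P Q z).roots.toFinset), rootMultiplicity a W
        = ∑ a ∈ T.biUnion (fun z => (fiberPoly P Q z).roots.toFinset), W.roots.count a := by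
          exact Finset.sum_congr rfl fun a _ => (count_roots W).symm
      _ ≤ Multiset.card W.roots := sum_count_le_card _ _
      _ ≤ W.natDegree := W.card_roots'
  -- second part
  by_cases hex : ∃ z₀ ∈ T, (fiberPoly P Q z₀).natDegree < d
  · obtain ⟨z₀, hz₀T, hz₀⟩ := hex
    have huniq : ∀ z ∈ T, z ≠ z₀ → ¬ (fiberPoly P Q z).natDegree < d := by
      intro z _ hne hlt
      have h1 := (ratApply_infty_eq_iff hcop hdeg hd z).mpr hlt
      have h2 := (ratApply_infty_eq_iff hcop hdeg hd z₀).mpr hz₀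
      exact hne (h1 ▸ h2 ▸ rfl)
    have hsum2 : ∑ z ∈ T, (d - (fiberPoly P Q z).natDegree
        - (if (fiberPoly P Q z).natDegree < d then 1 else 0))
        = d - (fiberPoly P Q z₀).natDegree - 1 := by
      rw [Finset.sum_eq_single_of_mem z₀ hz₀T]
      · rw [if_pos hz₀]
      · intro z hz hne
        have hnlt := huniq z hz hne
        have hle := fiberPoly_natDegree_le hcop hdeg hd z
        rw [if_neg hnlt]
        omega
    rw [hsum2]
    have hWdeg := wron_natDegree_le_fiber hcop hdeg hd z₀
    rw [← hWdef] at hWdeg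
    omega
  · push_neg at hex
    have hsum2 : ∑ z ∈ T, (d - (fiberPoly P Q z).natDegree
        - (if (fiberPoly P Q z).natDegree < d then 1 else 0)) = 0 := by
      refine Finset.sum_eq_zero fun z hz => ?_
      have hnlt := hex z hz
      have hle := fiberPoly_natDegree_le hcop hdeg hd z
      rw [if_neg (by omega)]
      omega
    rw [hsum2]
    have hmain := wron_natDegree_le_main hcop hdeg hd
    rw [← hWdef] at hmain
    omega

end Count











/-- If `E` is a finite set on the Riemann sphere such that every preimage of a point of `E`
under a rational map of degree `d ≥ 2` is either in `E` or a critical point, then `#E ≤ 4`. -/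
theorem branch_exceptional_card_le_four {d : ℕ} (hd : 2 ≤ d) (F : RatMap d)
    (E : Set (OnePoint ℂ)) (hE : E.Finite)
    (hpre : F.toFun ⁻¹' E ⊆ E ∪ critSet F.toFun) :
    E.ncard ≤ 4 := by
  classical
  have hcop := F.coprime
  have hdeg := F.deg
  have hf : F.toFun = ratApply F.P F.Q := rfl
  set P := F.P with hP
  set Q := F.Q with hQ
  set k := E.ncard with hk
  set T : Finset (OnePoint ℂ) := hE.toFinset with hT
  have hTcard : T.card = k := by
    rw [hT, hk, Set.ncard_eq_toFinset_card E hE]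
  -- the finite fibers
  set fibF : OnePoint ℂ → Finset (OnePoint ℂ) :=
    fun z => (fiber_finite hcop hdeg hd z).toFinset with hfibF
  have hfib_card : ∀ z, (fibF z).card = (ratApply P Q ⁻¹' {z}).ncard := by
    intro z
    rw [Set.ncard_eq_toFinset_card _ (fiber_finite hcop hdeg hd z)]
  -- decomposition of the preimage
  have hpreim_eq : F.toFun ⁻¹' E = ↑(T.biUnion fibF) := by
    ext x
    simp only [Set.mem_preimage, Finset.coe_biUnion, Set.mem_iUnion, Finset.mem_coe,
      Finset.mem_biUnion]
    constructor
    · intro hx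
      refine ⟨F.toFun x, ?_, ?_⟩
      · rw [hT]; exact hE.mem_toFinset.mpr hx
      · rw [hfibF]
        exact (fiber_finite hcop hdeg hd _).mem_toFinset.mpr (by rw [hf] at *; exact rfl)
    · rintro ⟨z, hzT, hxz⟩
      rw [hfibF] at hxz
      have := (fiber_finite hcop hdeg hd z).mem_toFinset.mp hxz
      rw [Set.mem_preimage, Set.mem_singleton_iff] at this
      rw [hf, this]
      rw [hT] at hzT
      exact hE.mem_toFinset.mp hzT
  have hdisjf : ∀ z1 ∈ T, ∀ z2 ∈ T, z1 ≠ z2 → Disjoint (fibF z1) (fibF z2) := by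
    intro z1 _ z2 _ hne
    rw [Finset.disjoint_left]
    intro x hx1 hx2
    rw [hfibF] at hx1 hx2
    have h1 := (fiber_finite hcop hdeg hd z1).mem_toFinset.mp hx1
    have h2 := (fiber_finite hcop hdeg hd z2).mem_toFinset.mp hx2
    rw [Set.mem_preimage, Set.mem_singleton_iff] at h1 h2
    exact hne (h1 ▸ h2 ▸ rfl)
  have hcount : (F.toFun ⁻¹' E).ncard = ∑ z ∈ T, (ratApply P Q ⁻¹' {z}).ncard := by
    rw [hpreim_eq, Set.ncard_coe_finset, Finset.card_biUnion hdisjf]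
    exact Finset.sum_congr rfl fun z _ => hfib_card z
  -- lower bound
  have hlow : k * d ≤ (F.toFun ⁻¹' E).ncard + (2 * d - 2) := by
    have hsum : ∑ z ∈ T, ((ratApply P Q ⁻¹' {z}).ncard
        + (((fiberPoly P Q z).natDegree - (fiberPoly P Q z).roots.toFinset.card)
          + (d - (fiberPoly P Q z).natDegree
              - (if (fiberPoly P Q z).natDegree < d then 1 else 0)))) = T.card * d := by
      rw [Finset.sum_congr rfl fun z _ => fiber_ncard_add_excess hcop hdeg hd z]
      rw [Finset.sum_const, smul_eq_mul]
    rw [Finset.sum_add_distrib, hTcard] at hsum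
    have hexc := sum_excess_le hcop hdeg hd T
    rw [hcount]
    omega
  -- upper bound
  have hcrit := critSet_ncard_le hcop hdeg hd
  have hcritfin := critSet_finite hcop hdeg hd
  have hup : (F.toFun ⁻¹' E).ncard ≤ k + (2 * d - 2) := by
    have h1 : (F.toFun ⁻¹' E).ncard ≤ (E ∪ critSet F.toFun).ncard := by
      refine Set.ncard_le_ncard hpre (hE.union ?_)
      rw [hf]; exact hcritfin
    refine h1.trans ?_
    refine (Set.ncard_union_le _ _).trans ?_
    rw [hf]
    omega
  -- conclude
  obtain ⟨e, rfl⟩ : ∃ e, d = e + 1 := ⟨d - 1, by omega⟩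
  have he : 1 ≤ e := by omega
  have hmain : k * (e + 1) ≤ k + 4 * e := by omega
  have hexp : k * (e + 1) = k * e + k := by ring
  have h3 : k * e ≤ 4 * e := by
    have : k * e + k ≤ 4 * e + k := by
      rw [← hexp]
      omega
    exact Nat.le_of_add_le_add_right this
  exact Nat.le_of_mul_le_mul_right h3 (by omega)
end

section
/- A rational map of degree d ≥ 2 has at most two exceptional points, i.e., at most two points z of the Riemann sphere whose full backward orbit ⋃_{n≥0} f^{-n}(z) is finite. -/
open Polynomial Filter Set Topology OnePoint

namespace ExcAux

noncomputable section

/-- The "fiber polynomial" of `z`: its roots are the finite preimages of `z`. -/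
def Rz (P Q : Polynomial ℂ) : OnePoint ℂ → Polynomial ℂ := fun z =>
  match z with
  | ∞ => Q
  | (a : ℂ) => P - C a * Q

/-- `P`-coefficient of `Rz` in the pencil. -/
def pa : OnePoint ℂ → ℂ := fun z => match z with | ∞ => 0 | (_ : ℂ) => 1

/-- `Q`-coefficient of `Rz` in the pencil. -/
def pb : OnePoint ℂ → ℂ := fun z => match z with | ∞ => 1 | (a : ℂ) => -a

variable {P Q : Polynomial ℂ} {d : ℕ}

lemma Rz_eq (z : OnePoint ℂ) : Rz P Q z = C (pa z) * P + C (pb z) * Q := by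
  induction z using OnePoint.rec with
  | infty => simp [Rz, pa, pb]
  | coe a => simp [Rz, pa, pb]; ring

lemma det_ne_zero {z z' : OnePoint ℂ} (h : z ≠ z') :
    pa z * pb z' - pa z' * pb z ≠ 0 := by
  induction z using OnePoint.rec with
  | infty =>
    induction z' using OnePoint.rec with
    | infty => exact absurd rfl h
    | coe a => simp [pa, pb]
  | coe a =>
    induction z' using OnePoint.rec with
    | infty => simp [pa, pb]
    | coe b =>
      simp only [pa, pb]
      have : a ≠ b := fun hh => h (by rw [hh])
      intro hc
      exact this (by linear_combination hc)

section Main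

variable (hco : IsCoprime P Q) (hdeg : max P.natDegree Q.natDegree = d) (hd : 2 ≤ d)

include hco hdeg hd

lemma hQ0 : Q ≠ 0 := by
  intro h
  subst h
  have := (isCoprime_zero_right).mp hco
  have := Polynomial.natDegree_eq_zero_of_isUnit this
  simp at hdeg
  omega

lemma hP0 : P ≠ 0 := by
  intro h
  subst h
  have := (isCoprime_zero_left).mp hco
  have := Polynomial.natDegree_eq_zero_of_isUnit this
  simp at hdeg
  omega

lemma no_common_root (x : ℂ) (hP : P.eval x = 0) (hQ : Q.eval x = 0) : False := by
  have h := hco.map (Polynomial.evalRingHom x)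
  simp only [coe_evalRingHom, hP, hQ] at h
  exact not_isUnit_zero (isCoprime_zero_left.mp h)

lemma Rz_ne_zero (z : OnePoint ℂ) : Rz P Q z ≠ 0 := by
  induction z using OnePoint.rec with
  | infty => exact hQ0 hco hdeg hd
  | coe a =>
    intro h
    have hPQ : P = C a * Q := by
      have := sub_eq_zero.mp h
      simpa [Rz] using this
    have hu : IsUnit Q := hco.isUnit_of_dvd' ⟨C a, by rw [hPQ]; ring⟩ dvd_rfl
    have h1 := Polynomial.natDegree_eq_zero_of_isUnit hu
    have h2 : P.natDegree = 0 := by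
      rw [hPQ]
      exact le_antisymm ((natDegree_C_mul_le a Q).trans h1.le) (Nat.zero_le _)
    rw [h1, h2] at hdeg
    omega

lemma natDegree_Rz_le (z : OnePoint ℂ) : (Rz P Q z).natDegree ≤ d := by
  induction z using OnePoint.rec with
  | infty => exact hdeg ▸ le_max_right _ _
  | coe a =>
    calc (Rz P Q (a : OnePoint ℂ)).natDegree = (P - C a * Q).natDegree := rfl
      _ ≤ max P.natDegree (C a * Q).natDegree := natDegree_sub_le _ _
      _ ≤ max P.natDegree Q.natDegree := max_le_max le_rfl (natDegree_C_mul_le a Q)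
      _ = d := hdeg

/-- A root of the fiber polynomial is a preimage. -/
lemma mem_fiber_of_root {z : OnePoint ℂ} {x : ℂ} (hx : (Rz P Q z).eval x = 0) :
    ratApply P Q x = z := by
  induction z using OnePoint.rec with
  | infty =>
    have hx' : Q.eval x = 0 := hx
    show (if Q.eval x = 0 then ∞ else ((P.eval x / Q.eval x : ℂ) : OnePoint ℂ)) = ∞
    rw [if_pos hx']
  | coe a =>
    have hRz : P.eval x - a * Q.eval x = 0 := by simpa [Rz] using hx
    have hQx : Q.eval x ≠ 0 := by
      intro h
      exact no_common_root hco hdeg hd x (by rw [h] at hRz; simpa using hRz) h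
    show (if Q.eval x = 0 then ∞ else ((P.eval x / Q.eval x : ℂ) : OnePoint ℂ)) = (a : OnePoint ℂ)
    rw [if_neg hQx]
    congr 1
    field_simp
    linear_combination hRz

/-- A finite preimage of `z` is a root of the fiber polynomial. -/
lemma root_of_mem_fiber {z : OnePoint ℂ} {x : ℂ} (hx : ratApply P Q x = z) :
    (Rz P Q z).eval x = 0 := by
  by_cases hQx : Q.eval x = 0
  · have : ratApply P Q x = ∞ := by
      show (if Q.eval x = 0 then ∞ else _) = ∞
      rw [if_pos hQx]
    rw [this] at hx
    subst hx
    simpa [Rz] using hQx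
  · have : ratApply P Q x = ((P.eval x / Q.eval x : ℂ) : OnePoint ℂ) := by
      show (if Q.eval x = 0 then ∞ else _) = _
      rw [if_neg hQx]
    rw [this] at hx
    induction z using OnePoint.rec with
    | infty => exact absurd hx (coe_ne_infty _)
    | coe a =>
      have h1 : P.eval x / Q.eval x = a := coe_eq_coe.mp hx
      have h2 : P.eval x = a * Q.eval x := by field_simp at h1; linear_combination h1
      simp [Rz, h2]

/-- If the fiber polynomial of a finite point degenerates in degree, `∞` maps to that point. -/
lemma infty_maps_of_deg_drop {a : ℂ} (hlt : (Rz P Q ((a : ℂ) : OnePoint ℂ)).natDegree < d) :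
    ratApply P Q ∞ = ((a : ℂ) : OnePoint ℂ) := by
  have hP : P ≠ 0 := hP0 hco hdeg hd
  have hQ : Q ≠ 0 := hQ0 hco hdeg hd
  have hR : Rz P Q ((a : ℂ) : OnePoint ℂ) = P - C a * Q := rfl
  by_cases ha : a = 0
  · subst ha
    simp only [map_zero, zero_mul, sub_zero] at hR
    rw [hR] at hlt
    have hQd : Q.natDegree = d := by
      have := hdeg; omega
    have hdeglt : P.degree < Q.degree := degree_lt_degree (by omega)
    show (if Q.degree < P.degree then ∞ else if P.degree < Q.degree then _ else _) = _
    rw [if_neg (by exact not_lt.mpr hdeglt.le), if_pos hdeglt]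
  · -- a ≠ 0
    have hCaQ : (C a * Q).natDegree = Q.natDegree := natDegree_C_mul ha
    rw [hR] at hlt
    have hPQdeg : P.natDegree = d ∧ Q.natDegree = d := by
      rcases lt_trichotomy P.natDegree Q.natDegree with h | h | h
      · exfalso
        rw [natDegree_sub_eq_right_of_natDegree_lt (by omega), hCaQ] at hlt
        omega
      · constructor <;> omega
      · exfalso
        rw [natDegree_sub_eq_left_of_natDegree_lt (by omega)] at hlt
        omega
    obtain ⟨hPd, hQd⟩ := hPQdeg
    have hcoeff : (P - C a * Q).coeff d = 0 := coeff_eq_zero_of_natDegree_lt hlt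
    have hlc : P.leadingCoeff = a * Q.leadingCoeff := by
      have : P.coeff d - a * Q.coeff d = 0 := by
        simpa using hcoeff
      rw [leadingCoeff, leadingCoeff, hPd, hQd]
      linear_combination this
    have hdegEq : P.degree = Q.degree := by
      rw [degree_eq_natDegree hP, degree_eq_natDegree hQ, hPd, hQd]
    show (if Q.degree < P.degree then ∞ else if P.degree < Q.degree then ((0:ℂ) : OnePoint ℂ)
      else ((P.leadingCoeff / Q.leadingCoeff : ℂ) : OnePoint ℂ)) = ((a : ℂ) : OnePoint ℂ)
    rw [if_neg (by rw [hdegEq]; exact lt_irrefl _), if_neg (by rw [hdegEq]; exact lt_irrefl _)]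
    congr 1
    have hlcQ : Q.leadingCoeff ≠ 0 := leadingCoeff_ne_zero.mpr hQ
    rw [hlc]
    field_simp

set_option linter.unusedSectionVars false

/-- `ratApply P Q` is surjective. -/
lemma ratApply_surjective : Function.Surjective (ratApply P Q) := by
  intro z
  by_cases h0 : (Rz P Q z).natDegree = 0
  · -- degenerate fiber polynomial: `∞` is a preimage
    induction z using OnePoint.rec with
    | infty =>
      refine ⟨∞, ?_⟩
      have hQd : Q.natDegree = 0 := h0
      have hPd : P.natDegree = d := by
        have := hdeg; omega
      have hdlt : Q.degree < P.degree := by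
        apply degree_lt_degree
        omega
      show (if Q.degree < P.degree then ∞ else _) = ∞
      rw [if_pos hdlt]
    | coe a =>
      exact ⟨∞, infty_maps_of_deg_drop hco hdeg hd (by omega)⟩
  · -- the fiber polynomial has a root
    have hne : 0 < (Rz P Q z).degree := by
      rw [degree_eq_natDegree (Rz_ne_zero hco hdeg hd z)]
      exact_mod_cast Nat.pos_of_ne_zero h0
    obtain ⟨x, hx⟩ := Complex.exists_root hne
    exact ⟨(x : OnePoint ℂ), mem_fiber_of_root hco hdeg hd hx⟩

/-- If the backward orbit of `z` is finite, the fiber over `z` is a subsingleton. -/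
lemma fiber_subsingleton_of_exceptional {z : OnePoint ℂ}
    (hfin : {w : OnePoint ℂ | ∃ n, (ratApply P Q)^[n] w = z}.Finite) :
    ((ratApply P Q) ⁻¹' {z}).Subsingleton := by
  set f := ratApply P Q with hf
  set B := {w : OnePoint ℂ | ∃ n, f^[n] w = z} with hB
  have hzB : z ∈ B := ⟨0, rfl⟩
  have hpre : f ⁻¹' B ⊆ B := by
    rintro w ⟨n, hn⟩
    exact ⟨n + 1, by rw [Function.iterate_succ_apply]; exact hn⟩
  have hsurj := ratApply_surjective hco hdeg hd
  set g : OnePoint ℂ → OnePoint ℂ := fun b => Classical.choose (hsurj b) with hg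
  have hgspec : ∀ b, f (g b) = b := fun b => Classical.choose_spec (hsurj b)
  have hginj : Function.Injective g := by
    intro a b hab
    have := hgspec a
    rw [hab, hgspec b] at this
    exact this.symm
  have hsub1 : g '' B ⊆ f ⁻¹' B := by
    rintro _ ⟨b, hb, rfl⟩
    show f (g b) ∈ B
    rw [hgspec]
    exact hb
  have hfinpre : (f ⁻¹' B).Finite := hfin.subset hpre
  have hcard : (f ⁻¹' B).ncard ≤ (g '' B).ncard := by
    rw [Set.ncard_image_of_injective _ hginj]
    exact Set.ncard_le_ncard hpre hfin
  have heq : g '' B = f ⁻¹' B := Set.eq_of_subset_of_ncard_le hsub1 hcard hfinpre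
  intro u hu v hv
  have hu' : u ∈ f ⁻¹' B := by
    simp only [Set.mem_preimage] at hu ⊢
    rw [hu.out]; exact hzB
  have hv' : v ∈ f ⁻¹' B := by
    simp only [Set.mem_preimage] at hv ⊢
    rw [hv.out]; exact hzB
  rw [← heq] at hu' hv'
  obtain ⟨bu, _, hbu⟩ := hu'
  obtain ⟨bv, _, hbv⟩ := hv'
  have h1 : bu = z := by rw [← hgspec bu, hbu]; exact hu.out
  have h2 : bv = z := by rw [← hgspec bv, hbv]; exact hv.out
  rw [← hbu, ← hbv, h1, h2]

/-- The two possible shapes of the fiber polynomial over a point with subsingleton fiber. -/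
lemma fiber_poly_form {z : OnePoint ℂ}
    (hsub : ((ratApply P Q) ⁻¹' {z}).Subsingleton) :
    (Rz P Q z).natDegree = 0 ∨
      ∃ c w, c ≠ 0 ∧ Rz P Q z = C c * (X - C w) ^ d := by
  by_cases h0 : (Rz P Q z).natDegree = 0
  · exact Or.inl h0
  right
  set R := Rz P Q z with hRdef
  have hR0 : R ≠ 0 := Rz_ne_zero hco hdeg hd z
  have hne : 0 < R.degree := by
    rw [degree_eq_natDegree hR0]
    exact_mod_cast Nat.pos_of_ne_zero h0
  obtain ⟨w, hw⟩ := Complex.exists_root hne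
  have hwmem : ((w : ℂ) : OnePoint ℂ) ∈ (ratApply P Q) ⁻¹' {z} :=
    mem_fiber_of_root hco hdeg hd hw
  -- every root of R equals w
  have hroots : ∀ x ∈ R.roots, x = w := by
    intro x hx
    have hx0 : R.eval x = 0 := (isRoot_of_mem_roots hx)
    have := hsub (mem_fiber_of_root hco hdeg hd hx0) hwmem
    exact coe_eq_coe.mp this
  have hcard : R.roots.card = R.natDegree :=
    splits_iff_card_roots.mp (IsAlgClosed.splits R)
  have hrep : R.roots = Multiset.replicate R.natDegree w := by
    rw [← hcard]
    exact Multiset.eq_replicate_of_mem hroots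
  have hfact : C R.leadingCoeff * (X - C w) ^ R.natDegree = R := by
    have := Polynomial.C_leadingCoeff_mul_prod_multiset_X_sub_C (p := R) hcard
    rwa [hrep, Multiset.map_replicate, Multiset.prod_replicate] at this
  -- the degree must be exactly d
  have hdeg_eq : R.natDegree = d := by
    by_contra hne'
    have hlt : R.natDegree < d := lt_of_le_of_ne (natDegree_Rz_le hco hdeg hd z) hne'
    have hinf : ratApply P Q ∞ = z := by
      induction z using OnePoint.rec with
      | infty =>
        have hQd : Q.natDegree < d := hlt
        have hPd : P.natDegree = d := by have := hdeg; omega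
        have hdlt : Q.degree < P.degree := degree_lt_degree (by omega)
        show (if Q.degree < P.degree then ∞ else _) = ∞
        rw [if_pos hdlt]
      | coe a => exact infty_maps_of_deg_drop hco hdeg hd hlt
    have : ((w : ℂ) : OnePoint ℂ) = ∞ := hsub hwmem hinf
    exact coe_ne_infty w this
  exact ⟨R.leadingCoeff, w, leadingCoeff_ne_zero.mpr hR0, by
    show R = C R.leadingCoeff * (X - C w) ^ d
    rw [← hdeg_eq]
    exact hfact.symm⟩

/-- At most one member of the pencil is a (nonzero) constant. -/
lemma const_unique {z z' : OnePoint ℂ} (hzz : z ≠ z')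
    (h1 : (Rz P Q z).natDegree = 0) (h2 : (Rz P Q z').natDegree = 0) : False := by
  -- both Rz are constants; a nontrivial combination of them is a nonzero multiple of
  -- Q (or P), forcing natDegree Q = 0 and natDegree P = 0, contradicting 2 ≤ d.
  obtain ⟨c1, hc1⟩ : ∃ c, C c = Rz P Q z := natDegree_eq_zero.mp h1
  obtain ⟨c2, hc2⟩ : ∃ c, C c = Rz P Q z' := natDegree_eq_zero.mp h2
  have e1 := Rz_eq (P := P) (Q := Q) z
  have e2 := Rz_eq (P := P) (Q := Q) z'
  set a1 := pa z; set b1 := pb z; set a2 := pa z'; set b2 := pb z'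
  have hdet : a1 * b2 - a2 * b1 ≠ 0 := det_ne_zero hzz
  -- solve for P and Q as constants
  have hQconst : C (a1 * b2 - a2 * b1) * Q = C (a1 * c2 - a2 * c1) := by
    rw [map_sub, map_sub, sub_mul, map_mul, map_mul, map_mul, map_mul, hc1, hc2, e1, e2]
    ring
  have hPconst : C (a1 * b2 - a2 * b1) * P = C (b2 * c1 - b1 * c2) := by
    rw [map_sub (f := C), map_sub (f := C), sub_mul, map_mul, map_mul, map_mul, map_mul,
      hc1, hc2, e1, e2]
    ring
  have hQd : Q.natDegree = 0 := by
    have := congrArg natDegree hQconst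
    rwa [natDegree_C_mul hdet, natDegree_C] at this
  have hPd : P.natDegree = 0 := by
    have := congrArg natDegree hPconst
    rwa [natDegree_C_mul hdet, natDegree_C] at this
  rw [hPd, hQd] at hdeg
  omega

/-- Distinct members of the pencil have no common root. -/
lemma no_common_root_Rz {z z' : OnePoint ℂ} (hzz : z ≠ z') {x : ℂ}
    (h1 : (Rz P Q z).eval x = 0) (h2 : (Rz P Q z').eval x = 0) : False := by
  have e1 := congrArg (Polynomial.eval x) (Rz_eq (P := P) (Q := Q) z)
  have e2 := congrArg (Polynomial.eval x) (Rz_eq (P := P) (Q := Q) z')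
  simp only [eval_add, eval_mul, eval_C] at e1 e2
  rw [h1] at e1
  rw [h2] at e2
  set a1 := pa z; set b1 := pb z; set a2 := pa z'; set b2 := pb z'
  have hdet : a1 * b2 - a2 * b1 ≠ 0 := det_ne_zero hzz
  have hQx : Q.eval x = 0 := by
    have h : (a1 * b2 - a2 * b1) * Q.eval x = 0 := by linear_combination a2 * e1 - a1 * e2
    exact (mul_eq_zero.mp h).resolve_left hdet
  have hPx : P.eval x = 0 := by
    have h : (a1 * b2 - a2 * b1) * P.eval x = 0 := by linear_combination b1 * e2 - b2 * e1
    exact (mul_eq_zero.mp h).resolve_left hdet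
  exact no_common_root hco hdeg hd x hPx hQx

lemma dterm (c w : ℂ) :
    Polynomial.derivative (C c * (X - C w) ^ d) = C c * (C (d : ℂ) * (X - C w) ^ (d - 1)) := by
  rw [derivative_C_mul, derivative_pow, derivative_sub, derivative_X, derivative_C, sub_zero,
    mul_one]

/-- Three distinct points cannot all have fiber polynomials of the special shapes. -/
lemma three_impossible {z1 z2 z3 : OnePoint ℂ} (h12 : z1 ≠ z2) (h13 : z1 ≠ z3) (h23 : z2 ≠ z3)
    (hp1 : ∃ c w, c ≠ 0 ∧ Rz P Q z1 = C c * (X - C w) ^ d)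
    (hp2 : ∃ c w, c ≠ 0 ∧ Rz P Q z2 = C c * (X - C w) ^ d)
    (h3 : (Rz P Q z3).natDegree = 0 ∨ ∃ c w, c ≠ 0 ∧ Rz P Q z3 = C c * (X - C w) ^ d) :
    False := by
  obtain ⟨c1, w1, hc1, hR1⟩ := hp1
  obtain ⟨c2, w2, hc2, hR2⟩ := hp2
  have hdpos : d - 1 ≠ 0 := by omega
  have hdC : (d : ℂ) ≠ 0 := Nat.cast_ne_zero.mpr (by omega)
  have hroot : ∀ (c w : ℂ), Polynomial.eval w (C c * (X - C w) ^ d) = 0 := by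
    intro c w
    simp [zero_pow (show d ≠ 0 by omega)]
  have hw12 : w1 ≠ w2 := by
    rintro rfl
    exact no_common_root_Rz hco hdeg hd h12 (by rw [hR1]; exact hroot c1 w1)
      (by rw [hR2]; exact hroot c2 w1)
  -- the three fiber polynomials satisfy a nontrivial linear relation
  set α := pa z2 * pb z3 - pa z3 * pb z2 with hα
  set β := pa z3 * pb z1 - pa z1 * pb z3 with hβ
  set γ := pa z1 * pb z2 - pa z2 * pb z1 with hγ
  have hα0 : α ≠ 0 := det_ne_zero h23
  have hβ0 : β ≠ 0 := det_ne_zero h13.symm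
  have hγ0 : γ ≠ 0 := det_ne_zero h12
  have hrel : C α * Rz P Q z1 + C β * Rz P Q z2 + C γ * Rz P Q z3 = 0 := by
    rw [Rz_eq z1, Rz_eq z2, Rz_eq z3, hα, hβ, hγ]
    simp only [map_sub, map_mul]
    ring
  rw [hR1, hR2] at hrel
  rcases h3 with h3 | h3
  · -- `Rz z3` is a constant
    obtain ⟨c3, hc3⟩ : ∃ c, C c = Rz P Q z3 := natDegree_eq_zero.mp h3
    rw [← hc3] at hrel
    have hrel' : C (α * c1) * (X - C w1) ^ d + C (β * c2) * (X - C w2) ^ d + C (γ * c3) = 0 := by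
      rw [map_mul, map_mul, map_mul]
      linear_combination hrel
    have hD := congrArg Polynomial.derivative hrel'
    rw [derivative_add, derivative_add, dterm hco hdeg hd, dterm hco hdeg hd, derivative_C,
      add_zero, derivative_zero] at hD
    have hE := congrArg (Polynomial.eval w1) hD
    simp only [eval_add, eval_mul, eval_C, eval_pow, eval_sub, eval_X, eval_zero, sub_self,
      zero_pow hdpos, mul_zero, zero_add, add_zero] at hE
    exact (mul_ne_zero (mul_ne_zero hβ0 hc2) (mul_ne_zero hdC
      (pow_ne_zero _ (sub_ne_zero.mpr hw12)))) hE
  · -- `Rz z3` is also a `d`-th power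
    obtain ⟨c3, w3, hc3, hR3⟩ := h3
    rw [hR3] at hrel
    have hw13 : w1 ≠ w3 := by
      rintro rfl
      exact no_common_root_Rz hco hdeg hd h13 (by rw [hR1]; exact hroot c1 w1)
        (by rw [hR3]; exact hroot c3 w1)
    have hw23 : w2 ≠ w3 := by
      rintro rfl
      exact no_common_root_Rz hco hdeg hd h23 (by rw [hR2]; exact hroot c2 w2)
        (by rw [hR3]; exact hroot c3 w2)
    have hrel' : C (α * c1) * (X - C w1) ^ d + C (β * c2) * (X - C w2) ^ d
        + C (γ * c3) * (X - C w3) ^ d = 0 := by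
      rw [map_mul, map_mul, map_mul]
      linear_combination hrel
    -- derivative relation
    have hD := congrArg Polynomial.derivative hrel'
    rw [derivative_add, derivative_add, dterm hco hdeg hd, dterm hco hdeg hd, dterm hco hdeg hd,
      derivative_zero] at hD
    have hE2 : C (d : ℂ) * (C (α * c1) * (X - C w1) ^ (d - 1)
        + C (β * c2) * (X - C w2) ^ (d - 1)
        + C (γ * c3) * (X - C w3) ^ (d - 1)) = 0 := by
      linear_combination hD
    have hdCpoly : (C (d : ℂ) : Polynomial ℂ) ≠ 0 := by
      simpa using hdC
    have hE2' : C (α * c1) * (X - C w1) ^ (d - 1) + C (β * c2) * (X - C w2) ^ (d - 1)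
        + C (γ * c3) * (X - C w3) ^ (d - 1) = 0 :=
      (mul_eq_zero.mp hE2).resolve_left hdCpoly
    -- split off one factor of each power in the original relation
    have hsplit : ∀ w : ℂ, (X - C w) ^ d = (X - C w) ^ (d - 1) * (X - C w) := by
      intro w
      rw [← pow_succ]
      congr 1
      omega
    rw [hsplit w1, hsplit w2, hsplit w3] at hrel'
    -- eliminate the top-degree part
    have hE3 : C (α * c1) * (C w1 * (X - C w1) ^ (d - 1))
        + C (β * c2) * (C w2 * (X - C w2) ^ (d - 1))
        + C (γ * c3) * (C w3 * (X - C w3) ^ (d - 1)) = 0 := by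
      linear_combination X * hE2' - hrel'
    have hE4 : C (β * c2) * ((C w1 - C w2) * (X - C w2) ^ (d - 1))
        + C (γ * c3) * ((C w1 - C w3) * (X - C w3) ^ (d - 1)) = 0 := by
      linear_combination C w1 * hE2' - hE3
    have hE := congrArg (Polynomial.eval w3) hE4
    simp only [eval_add, eval_mul, eval_sub, eval_C, eval_pow, eval_X, sub_self,
      zero_pow hdpos, mul_zero, add_zero, eval_zero] at hE
    exact (mul_ne_zero (mul_ne_zero hβ0 hc2) (mul_ne_zero (sub_ne_zero.mpr hw12)
      (pow_ne_zero _ (sub_ne_zero.mpr hw23.symm)))) hE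

end Main

end

end ExcAux

/-- A rational map of degree `d ≥ 2` has at most two exceptional points, i.e. points whose
full backward orbit `⋃ₙ f⁻ⁿ(z)` is finite. -/
theorem exceptional_points_le_two {d : ℕ} (hd : 2 ≤ d) (F : RatMap d) :
    {z : OnePoint ℂ | {w : OnePoint ℂ | ∃ n, F.toFun^[n] w = z}.Finite}.encard ≤ 2 := by
  by_contra h
  push_neg at h
  obtain ⟨t, hts, ht3⟩ := Set.exists_subset_encard_eq (Order.add_one_le_of_lt h)
  have ht3' : t.encard = 3 := by convert ht3 using 2; norm_num
  obtain ⟨z1, z2, z3, h12, h13, h23, rfl⟩ := Set.encard_eq_three.mp ht3'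
  have hco := F.coprime
  have hdeg := F.deg
  have hf : F.toFun = ratApply F.P F.Q := rfl
  have form : ∀ z ∈ ({z1, z2, z3} : Set (OnePoint ℂ)),
      (ExcAux.Rz F.P F.Q z).natDegree = 0 ∨
        ∃ c w, c ≠ 0 ∧ ExcAux.Rz F.P F.Q z = Polynomial.C c * (Polynomial.X - Polynomial.C w) ^ d := by
    intro z hz
    have hfin : {w : OnePoint ℂ | ∃ n, (ratApply F.P F.Q)^[n] w = z}.Finite := by
      rw [← hf]; exact hts hz
    exact ExcAux.fiber_poly_form hco hdeg hd
      (ExcAux.fiber_subsingleton_of_exceptional hco hdeg hd hfin)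
  have f1 := form z1 (by simp)
  have f2 := form z2 (by simp)
  have f3 := form z3 (by simp)
  rcases f1 with f1 | f1
  · rcases f2 with f2 | f2
    · exact ExcAux.const_unique hco hdeg hd h12 f1 f2
    · rcases f3 with f3 | f3
      · exact ExcAux.const_unique hco hdeg hd h13 f1 f3
      · exact ExcAux.three_impossible hco hdeg hd h23 h12.symm h13.symm f2 f3 (Or.inl f1)
  · rcases f2 with f2 | f2
    · rcases f3 with f3 | f3
      · exact ExcAux.const_unique hco hdeg hd h23 f2 f3
      · exact ExcAux.three_impossible hco hdeg hd h13 h12 h23.symm f1 f3 (Or.inl f2)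
    · exact ExcAux.three_impossible hco hdeg hd h12 h13 h23 f1 f2 f3
end

section
/- Let f_λ(z) = z·(z − 1)/(z² − z − 1/λ) with λ ∈ ℂ∖{0} be a quadratic rational map. Then ∞ is a critical point of f_λ, and every backward orbit of the fixed point 0 under f_λ that is not the constant orbit (0 ← 0 ← 0 ← …) passes through the point ∞; in particular 0 has only finitely many backward orbits avoiding all critical points. -/
open Polynomial Filter Set Topology OnePoint Metric Bornology

section FL

variable {c : ℂ} (hc : c ≠ 0)

lemma fl_degP : (X^2 - X : Polynomial ℂ).degree = 2 := by compute_degree!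

lemma fl_degQ : (X^2 - X - C c : Polynomial ℂ).degree = 2 := by compute_degree!

lemma fl_lcP : (X^2 - X : Polynomial ℂ).leadingCoeff = 1 :=
  monic_X_pow_sub (by simpa using degree_X_le)

lemma fl_lcQ : (X^2 - X - C c : Polynomial ℂ).leadingCoeff = 1 := by
  have hd : (X + C c : Polynomial ℂ).degree ≤ (1 : ℕ) := by
    refine le_trans (degree_add_le _ _) (max_le degree_X_le ?_)
    exact le_trans degree_C_le (by norm_num)
  have h : (X^2 - (X + C c) : Polynomial ℂ).Monic := monic_X_pow_sub (hd.trans_lt (by norm_num))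
  simpa [sub_sub] using h.leadingCoeff

/-- value at infinity -/
lemma fl_inf : ratApply (X^2 - X) (X^2 - X - C c) ∞ = ((1:ℂ) : OnePoint ℂ) := by
  show (if _ then _ else _) = _
  rw [fl_degP, fl_degQ, if_neg (lt_irrefl _), if_neg (lt_irrefl _), fl_lcP, fl_lcQ]
  norm_num

lemma fl_coe (z : ℂ) : ratApply (X^2 - X) (X^2 - X - C c) (z : OnePoint ℂ) =
    if z^2 - z - c = 0 then ∞ else (((z^2 - z) / (z^2 - z - c) : ℂ) : OnePoint ℂ) := by
  show (if _ then _ else _) = _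
  simp

/-- preimages of 0 -/
lemma fl_pre0 (hc : c ≠ 0) (x : OnePoint ℂ) :
    ratApply (X^2 - X) (X^2 - X - C c) x = ((0:ℂ) : OnePoint ℂ) ↔
      x = ((0:ℂ) : OnePoint ℂ) ∨ x = ((1:ℂ) : OnePoint ℂ) := by
  cases x with
  | infty =>
    rw [fl_inf]
    simp [OnePoint.coe_eq_coe, (OnePoint.infty_ne_coe _)]
  | coe z =>
    rw [fl_coe]
    by_cases hz : z^2 - z - c = 0
    · rw [if_pos hz]
      constructor
      · intro h; exact absurd h (OnePoint.infty_ne_coe _)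
      · rintro (h | h) <;> rw [OnePoint.coe_eq_coe] at h <;> subst h <;>
          exact absurd hz (by simpa using hc)
    · rw [if_neg hz]
      rw [OnePoint.coe_eq_coe, OnePoint.coe_eq_coe, OnePoint.coe_eq_coe]
      rw [_root_.div_eq_zero_iff]
      constructor
      · rintro (h | h)
        · have : z * (z - 1) = 0 := by linear_combination h
          rcases mul_eq_zero.mp this with h' | h'
          · exact Or.inl h'
          · exact Or.inr (by linear_combination h')
        · exact absurd h hz
      · rintro (h | h) <;> subst h <;> left <;> ring

/-- preimage of 1 is exactly ∞ -/
lemma fl_pre1 (hc : c ≠ 0) (x : OnePoint ℂ) :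
    ratApply (X^2 - X) (X^2 - X - C c) x = ((1:ℂ) : OnePoint ℂ) ↔ x = ∞ := by
  cases x with
  | infty => simp [fl_inf]
  | coe z =>
    rw [fl_coe]
    constructor
    · intro h
      by_cases hz : z^2 - z - c = 0
      · rw [if_pos hz] at h; exact absurd h (OnePoint.infty_ne_coe _)
      · rw [if_neg hz, OnePoint.coe_eq_coe, div_eq_one_iff_eq hz] at h
        exact absurd (by linear_combination h) hc
    · intro h; exact absurd h (OnePoint.coe_ne_infty _)

/-- preimage of a generic w near 1: the two roots of z² - z = wc/(w-1) -/
lemma fl_preW (hc : c ≠ 0) (w : ℂ) (hw : w ≠ 1) (s : ℂ)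
    (hs2 : s ^ 2 = 1 + 4 * (w * c / (w - 1))) (x : OnePoint ℂ) :
    ratApply (X^2 - X) (X^2 - X - C c) x = ((w:ℂ) : OnePoint ℂ) ↔
      x = (((1 + s)/2 : ℂ) : OnePoint ℂ) ∨ x = (((1 - s)/2 : ℂ) : OnePoint ℂ) := by
  have hw1 : w - 1 ≠ 0 := sub_ne_zero.mpr hw
  set t : ℂ := w * c / (w - 1) with ht
  cases x with
  | infty =>
    rw [fl_inf]
    simp only [OnePoint.coe_eq_coe, OnePoint.infty_ne_coe]
    exact ⟨fun h => absurd h.symm hw, fun h => h.elim (fun h => h.elim) (fun h => h.elim)⟩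
  | coe z =>
    rw [fl_coe]
    simp only [OnePoint.coe_eq_coe]
    have key : (if z^2 - z - c = 0 then ∞ else (((z^2 - z) / (z^2 - z - c) : ℂ) : OnePoint ℂ))
        = ((w:ℂ) : OnePoint ℂ) ↔ z^2 - z = t := by
      by_cases hz : z^2 - z - c = 0
      · rw [if_pos hz]
        constructor
        · intro h; exact absurd h (OnePoint.infty_ne_coe _)
        · intro h
          exfalso
          have hzc : z^2 - z = c := by linear_combination hz
          rw [hzc, ht, eq_div_iff hw1] at h
          exact hc (by linear_combination -h)
      · rw [if_neg hz, OnePoint.coe_eq_coe, div_eq_iff hz]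
        constructor
        · intro h
          rw [ht, eq_div_iff hw1]
          linear_combination -h
        · intro h
          rw [ht, eq_div_iff hw1] at h
          linear_combination -h
    rw [key]
    have factor : z^2 - z - t = (z - (1 + s)/2) * (z - (1 - s)/2) := by
      have : t = (s^2 - 1)/4 := by rw [hs2]; ring
      rw [this]; ring
    constructor
    · intro h
      have : (z - (1 + s)/2) * (z - (1 - s)/2) = 0 := by rw [← factor]; linear_combination h
      rcases mul_eq_zero.mp this with h' | h'
      · exact Or.inl (by linear_combination h')
      · exact Or.inr (by linear_combination h')
    · rintro (h | h) <;> subst h <;> linear_combination hs2/4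

lemma fl_nhdsNE_one : 𝓝[≠] ((1:ℂ) : OnePoint ℂ) = map ((↑) : ℂ → OnePoint ℂ) (𝓝[≠] (1:ℂ)) := by
  have h : (((↑) : ℂ → OnePoint ℂ) ⁻¹' ({((1:ℂ):OnePoint ℂ)}ᶜ)) = {(1:ℂ)}ᶜ := by
    ext z; simp [OnePoint.coe_eq_coe]
  rw [OnePoint.nhdsWithin_coe, h]

lemma fl_localdeg (hc : c ≠ 0) :
    IsLocalDeg (ratApply (X^2 - X) (X^2 - X - C c)) ∞ 2 := by
  intro U hU
  have hU' : ((↑) : ℂ → OnePoint ℂ) ⁻¹' U ∈ coclosedCompact ℂ := by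
    rw [← OnePoint.comap_coe_nhds_infty]; exact preimage_mem_comap hU
  rw [Filter.coclosedCompact_eq_cocompact, ← Metric.cobounded_eq_cocompact] at hU'
  obtain ⟨M, -, hM⟩ :=
    (Metric.hasBasis_cobounded_compl_closedBall (0:ℂ)).mem_iff.mp hU'
  set N : ℝ := max M 0 with hNdef
  have hN0 : (0:ℝ) ≤ N := le_max_right _ _
  have hMN : ∀ z : ℂ, N < ‖z‖ → (z : OnePoint ℂ) ∈ U := by
    intro z hz
    apply hM
    simp only [Set.mem_compl_iff, Metric.mem_closedBall, dist_zero_right, not_le]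
    exact lt_of_le_of_lt (le_max_left M 0) hz
  set V : Set (OnePoint ℂ) := ((↑) '' (Metric.closedBall (0:ℂ) N)ᶜ) ∪ {∞} with hVdef
  have hVU : V ⊆ U := by
    rintro x (⟨z, hz, rfl⟩ | hx)
    · apply hMN
      simpa [Metric.mem_closedBall, dist_zero_right] using hz
    · rw [Set.mem_singleton_iff.mp hx]
      exact mem_of_mem_nhds hU
  have hVnhd : V ∈ 𝓝 (∞ : OnePoint ℂ) := by
    apply OnePoint.hasBasis_nhds_infty.mem_of_mem (i := Metric.closedBall (0:ℂ) N)
    exact ⟨Metric.isClosed_closedBall, isCompact_closedBall _ _⟩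
  refine ⟨V, hVnhd, hVU, ?_⟩
  rw [fl_inf, fl_nhdsNE_one, Filter.eventually_map]
  set K : ℝ := max (1/4) (N * (N + 1)) with hKdef
  have hK0 : (0:ℝ) ≤ K := le_trans (by norm_num) (le_max_left _ _)
  have hcpos : (0:ℝ) < ‖c‖ := norm_pos_iff.mpr hc
  set δ : ℝ := ‖c‖ / (2 * (K + 1)) with hδdef
  have hδpos : 0 < δ := by positivity
  have hball : Metric.ball (1:ℂ) (min δ (1/2)) ∈ 𝓝[≠] (1:ℂ) :=
    nhdsWithin_le_nhds (Metric.ball_mem_nhds _ (by positivity))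
  filter_upwards [hball, self_mem_nhdsWithin] with w hwb hw1'
  have hw1 : w ≠ 1 := hw1'
  have hwd : ‖w - 1‖ < min δ (1/2) := by
    simpa [Complex.dist_eq] using hwb
  have hwd0 : 0 < ‖w - 1‖ := by
    rw [norm_pos_iff]; exact sub_ne_zero.mpr hw1
  have hwn : (1:ℝ)/2 ≤ ‖w‖ := by
    have h1 := norm_sub_norm_le (1:ℂ) (1 - w)
    simp only [norm_one, sub_sub_cancel] at h1
    have h2 : ‖w - 1‖ < 1/2 := lt_of_lt_of_le hwd (min_le_right _ _)
    rw [norm_sub_rev] at h2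
    linarith
  set t : ℂ := w * c / (w - 1) with htdef
  have htn : K < ‖t‖ := by
    have hδle : ‖w - 1‖ < δ := lt_of_lt_of_le hwd (min_le_left _ _)
    have h1 : ‖t‖ = ‖w‖ * ‖c‖ / ‖w - 1‖ := by
      rw [htdef, norm_div, norm_mul]
    rw [h1, lt_div_iff₀ hwd0]
    have h2 : (K + 1) * ‖w - 1‖ < (K + 1) * δ := by
      apply mul_lt_mul_of_pos_left hδle; linarith
    have h3 : (K + 1) * δ = ‖c‖ / 2 := by
      rw [hδdef]; field_simp
    nlinarith
  have ht14 : (1:ℝ)/4 < ‖t‖ := lt_of_le_of_lt (le_max_left _ _ : (1:ℝ)/4 ≤ K) htn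
  have htNN : N * (N + 1) < ‖t‖ := lt_of_le_of_lt (le_max_right _ _) htn
  have hne : (1 : ℂ) + 4 * t ≠ 0 := by
    intro h
    have : t = -(1/4) := by linear_combination h/4
    rw [this] at ht14
    norm_num [norm_neg] at ht14
  obtain ⟨s, hs2⟩ := IsAlgClosed.exists_pow_nat_eq ((1:ℂ) + 4 * t) (n := 2) (by norm_num)
  have hs0 : s ≠ 0 := by
    intro h; rw [h] at hs2; simp at hs2; exact hne hs2.symm
  set r1 : ℂ := (1 + s)/2 with hr1
  set r2 : ℂ := (1 - s)/2 with hr2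
  have hr12 : r1 ≠ r2 := by
    intro h; apply hs0
    rw [hr1, hr2] at h
    linear_combination h
  have hprod : r1 * r2 = -t := by
    rw [hr1, hr2]; linear_combination -hs2/4
  have hnorm : ∀ r r' : ℂ, r * r' = -t → r + r' = 1 → N < ‖r‖ := by
    intro r r' hp hsum
    by_contra h
    push_neg at h
    have hr' : ‖r'‖ ≤ N + 1 := by
      have : r' = 1 - r := by linear_combination hsum
      rw [this]
      calc ‖(1:ℂ) - r‖ ≤ ‖(1:ℂ)‖ + ‖r‖ := norm_sub_le _ _
        _ ≤ N + 1 := by rw [norm_one]; linarith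
    have : ‖t‖ = ‖r‖ * ‖r'‖ := by
      rw [← norm_neg t, ← hp, norm_mul]
    nlinarith [norm_nonneg r, norm_nonneg r']
  have hn1 : N < ‖r1‖ := hnorm r1 r2 hprod (by rw [hr1, hr2]; ring)
  have hn2 : N < ‖r2‖ := hnorm r2 r1 (by rw [mul_comm]; exact hprod) (by rw [hr1, hr2]; ring)
  have hseteq : V ∩ (ratApply (X^2 - X) (X^2 - X - C c)) ⁻¹' {((w:ℂ) : OnePoint ℂ)}
      = {((r1:ℂ) : OnePoint ℂ), ((r2:ℂ) : OnePoint ℂ)} := by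
    ext x
    simp only [Set.mem_inter_iff, Set.mem_preimage, Set.mem_singleton_iff,
      Set.mem_insert_iff]
    rw [fl_preW hc w hw1 s (by rw [hs2, htdef])]
    constructor
    · rintro ⟨-, h⟩; exact h
    · rintro (rfl | rfl)
      · refine ⟨?_, Or.inl rfl⟩
        left
        refine ⟨r1, ?_, rfl⟩
        simp only [Set.mem_compl_iff, Metric.mem_closedBall, dist_zero_right, not_le]
        exact hn1
      · refine ⟨?_, Or.inr rfl⟩
        left
        refine ⟨r2, ?_, rfl⟩
        simp only [Set.mem_compl_iff, Metric.mem_closedBall, dist_zero_right, not_le]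
        exact hn2
  rw [hseteq]
  exact Set.ncard_pair (by simpa [OnePoint.coe_eq_coe] using hr12)

end FL

/-- For the quadratic rational map `f_λ(z) = z(z−1)/(z² − z − 1/λ)` (`λ ≠ 0`): `∞` is a
critical point of `f_λ`, every backward orbit of the fixed point `0` other than the constant
orbit passes through `∞`, and in particular `0` has only finitely many backward orbits
avoiding all critical points. -/
theorem f_lambda_branch_exceptional (lam : ℂ) (hlam : lam ≠ 0)
    (f : OnePoint ℂ → OnePoint ℂ)
    (hf : f = ratApply (X ^ 2 - X) (X ^ 2 - X - C (1 / lam))) :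
    (∞ : OnePoint ℂ) ∈ critSet f ∧
    (∀ zhat : ℕ → OnePoint ℂ, zhat 0 = ((0 : ℂ) : OnePoint ℂ) →
      (∀ k, f (zhat (k + 1)) = zhat k) →
      zhat ≠ (fun _ => ((0 : ℂ) : OnePoint ℂ)) → ∃ k, zhat k = ∞) ∧
    {zhat : ℕ → OnePoint ℂ | zhat 0 = ((0 : ℂ) : OnePoint ℂ) ∧
      (∀ k, f (zhat (k + 1)) = zhat k) ∧ ∀ k, 1 ≤ k → zhat k ∉ critSet f}.Finite := by
  have hc : (1/lam : ℂ) ≠ 0 := one_div_ne_zero hlam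
  subst hf
  have hcrit : (∞ : OnePoint ℂ) ∈ critSet (ratApply (X^2 - X) (X^2 - X - C (1/lam))) :=
    ⟨2, le_refl 2, fl_localdeg hc⟩
  have hpart2 : ∀ zhat : ℕ → OnePoint ℂ, zhat 0 = ((0:ℂ) : OnePoint ℂ) →
      (∀ k, ratApply (X^2 - X) (X^2 - X - C (1/lam)) (zhat (k + 1)) = zhat k) →
      zhat ≠ (fun _ => ((0:ℂ) : OnePoint ℂ)) → ∃ k, zhat k = ∞ := by
    intro zhat h0 hback hne
    classical
    have hex : ∃ k, zhat k ≠ ((0:ℂ) : OnePoint ℂ) := by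
      by_contra h
      push_neg at h
      exact hne (funext h)
    have hk := Nat.find_spec hex
    rcases hn : Nat.find hex with _ | m
    · rw [hn] at hk; exact absurd h0 hk
    · rw [hn] at hk
      have hm : zhat m = ((0:ℂ) : OnePoint ℂ) :=
        not_not.mp (Nat.find_min hex (hn ▸ Nat.lt_succ_self m))
      have h1 : zhat (m + 1) = ((1:ℂ) : OnePoint ℂ) := by
        have := (fl_pre0 hc (zhat (m+1))).mp (by rw [hback m, hm])
        rcases this with h | h
        · exact absurd h hk
        · exact h
      have h2 : zhat (m + 2) = ∞ :=
        (fl_pre1 hc (zhat (m+2))).mp (by rw [hback (m+1), h1])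
      exact ⟨m + 2, h2⟩
  refine ⟨hcrit, hpart2, ?_⟩
  apply Set.Finite.subset (Set.finite_singleton (fun _ => ((0:ℂ) : OnePoint ℂ)))
  rintro zhat ⟨h0, hback, hfree⟩
  rw [Set.mem_singleton_iff]
  by_contra hne
  obtain ⟨k, hk⟩ := hpart2 zhat h0 hback hne
  have hk1 : 1 ≤ k := by
    rcases Nat.eq_zero_or_pos k with rfl | h
    · rw [h0] at hk; exact (OnePoint.coe_ne_infty _ hk).elim
    · exact h
  exact hfree k hk1 (by rw [hk]; exact hcrit)
end

section
/- Let p be a quadratic polynomial p(z) = z² + c with connected Julia set, and let β be its repelling fixed point with Koenigs linearization φ : ℂ → ℂ satisfying φ(0) = β and p(φ(z)) = φ(λz), where λ = p'(β), |λ| > 1. Then the map Φ : ℂ → N_p sending z to the backward orbit (φ(z), φ(z/λ), φ(z/λ²), …) is a well-defined continuous injection whose image is a path-connected subset of the natural extension consisting of regular backward orbits; in particular the leaf of the invariant lift of β is a parabolic Riemann surface (conformally ℂ). -/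
open Filter Set Topology

/-- The natural extension (inverse limit) of the dynamical system `(X, f)`: the space of
backward orbits `(z₀, z₋₁, z₋₂, …)` with `f(z₋ₖ₋₁) = z₋ₖ`, topologized as a subspace of the
product `X^ℕ`. -/
abbrev NatExt {X : Type*} (f : X → X) : Type _ :=
  {z : ℕ → X // ∀ k, f (z (k + 1)) = z k}

/-- The natural extension map `f̂(z₀, z₋₁, …) = (f(z₀), z₀, z₋₁, …)`. -/
def natExtMap {X : Type*} (f : X → X) (z : NatExt f) : NatExt f :=
  ⟨fun k => Nat.casesOn k (f (z.1 0)) fun n => z.1 n, by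
    intro k
    cases k with
    | zero => rfl
    | succ n => exact z.2 n⟩

/-- The shift map `(z₀, z₋₁, z₋₂, …) ↦ (z₋₁, z₋₂, …)` on the natural extension. -/
def natExtShift {X : Type*} (f : X → X) (z : NatExt f) : NatExt f :=
  ⟨fun k => z.1 (k + 1), fun k => z.2 (k + 1)⟩

/-- The filled Julia set of a polynomial map: points with bounded forward orbit. -/
def filledJulia (p : ℂ → ℂ) : Set ℂ :=
  {z | Bornology.IsBounded (Set.range fun n : ℕ => p^[n] z)}

/-- A backward orbit is regular: some connected open neighborhood of its initial point
pulls back along the orbit univalently for all sufficiently large steps. -/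
def IsRegularOrbit (f : ℂ → ℂ) (z : ℕ → ℂ) : Prop :=
  ∃ U : Set ℂ, IsOpen U ∧ IsConnected U ∧ z 0 ∈ U ∧
    ∃ N : ℕ, ∀ k ≥ N, Set.InjOn f (connectedComponentIn (f^[k + 1] ⁻¹' U) (z (k + 1)))


private lemma iter_growth (c : ℂ) {x : ℂ} (hx : ‖c‖ + 2 ≤ ‖x‖) (k : ℕ) :
    ‖c‖ + 2 ≤ ‖(fun z : ℂ => z ^ 2 + c)^[k] x‖ ∧ ‖x‖ ≤ ‖(fun z : ℂ => z ^ 2 + c)^[k] x‖ := by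
  induction k with
  | zero => exact ⟨by simpa using hx, by simp⟩
  | succ n ih =>
    rw [Function.iterate_succ_apply']
    set y := (fun z : ℂ => z ^ 2 + c)^[n] x with hy
    show ‖c‖ + 2 ≤ ‖y ^ 2 + c‖ ∧ ‖x‖ ≤ ‖y ^ 2 + c‖
    have h1 : ‖y ^ 2‖ ≤ ‖y ^ 2 + c‖ + ‖c‖ := by
      have e : y ^ 2 = (y ^ 2 + c) + (-c) := by ring
      calc ‖y ^ 2‖ = ‖(y ^ 2 + c) + (-c)‖ := by rw [← e]
        _ ≤ ‖y ^ 2 + c‖ + ‖-c‖ := norm_add_le _ _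
        _ = ‖y ^ 2 + c‖ + ‖c‖ := by rw [norm_neg]
    rw [norm_pow] at h1
    have hc : (0:ℝ) ≤ ‖c‖ := norm_nonneg c
    have hx0 : (0:ℝ) ≤ ‖x‖ := norm_nonneg x
    constructor <;> nlinarith [ih.1, ih.2]

private lemma component_small {f : ℂ → ℂ} (hf : Continuous f) {w z0 : ℂ} {η : ℝ}
    (hη : 0 < η) (hw : f w = z0) (hsph : ∀ x ∈ Metric.sphere w η, f x ≠ z0) :
    ∃ δ > 0, connectedComponentIn (f ⁻¹' Metric.ball z0 δ) w ⊆ Metric.ball w η := by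
  obtain ⟨x₀, hx₀, hmin⟩ := (isCompact_sphere w η).exists_isMinOn
    (NormedSpace.sphere_nonempty.mpr hη.le) ((hf.dist continuous_const).continuousOn)
  have hδ0 : 0 < dist (f x₀) z0 := dist_pos.mpr (hsph x₀ hx₀)
  refine ⟨dist (f x₀) z0, hδ0, ?_⟩
  have hsub : connectedComponentIn (f ⁻¹' Metric.ball z0 (dist (f x₀) z0)) w ⊆
      f ⁻¹' Metric.ball z0 (dist (f x₀) z0) := connectedComponentIn_subset _ _
  have hnointer : ∀ x ∈ f ⁻¹' Metric.ball z0 (dist (f x₀) z0), x ∉ Metric.sphere w η := by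
    intro x hx hxs
    have h1 : dist (f x₀) z0 ≤ dist (f x) z0 := hmin hxs
    have h2 : dist (f x) z0 < dist (f x₀) z0 := hx
    linarith
  refine (isPreconnected_connectedComponentIn).subset_left_of_subset_union
    Metric.isOpen_ball Metric.isClosed_closedBall.isOpen_compl
    (disjoint_compl_right.mono_left Metric.ball_subset_closedBall) ?_ ?_
  · intro x hx
    rcases lt_trichotomy (dist x w) η with h | h | h
    · exact Or.inl h
    · exact absurd h (hnointer x (hsub hx))
    · exact Or.inr (by simpa [Metric.mem_closedBall, not_le] using h)
  · refine ⟨w, mem_connectedComponentIn ?_, Metric.mem_ball_self hη⟩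
    simp [Set.mem_preimage, Metric.mem_ball, hw, hδ0]

private lemma regular_aux {c β : ℂ} {p : ℂ → ℂ} (hp : p = fun z => z ^ 2 + c)
    (hfix : p β = β) (hβ : 1 / 2 < ‖β‖) {orb : ℕ → ℂ}
    (horb : ∀ k, p (orb (k + 1)) = orb k)
    (htend : Filter.Tendsto orb Filter.atTop (𝓝 β)) :
    IsRegularOrbit p orb := by
  have hβc : β ^ 2 + c = β := by rw [hp] at hfix; exact hfix
  have hpc : Continuous p := by rw [hp]; continuity
  have hpd : Differentiable ℂ p := by rw [hp]; exact (differentiable_pow 2).add_const c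
  set r : ℝ := min ‖β‖ (2 * ‖β‖ - 1) with hrdef
  have hr0 : 0 < r := lt_min (by linarith) (by linarith)
  have hrβ : r ≤ ‖β‖ := min_le_left _ _
  have hr1 : r ≤ 2 * ‖β‖ - 1 := min_le_right _ _
  set t : ℝ := r ^ 2 / 2 with htdef
  have ht0 : 0 < t := by positivity
  have htr : t < r ^ 2 := by nlinarith
  have hit : ∀ k, p^[k] (orb k) = orb 0 := by
    intro k
    induction k with
    | zero => rfl
    | succ n ih => rw [Function.iterate_succ_apply, horb n]; exact ih
  obtain ⟨k₀, hk₀⟩ := Metric.tendsto_atTop.mp htend (min r (t/2)) (lt_min hr0 (by positivity))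
  have hfd : Differentiable ℂ p^[k₀] := hpd.iterate k₀
  have hfz : p^[k₀] (orb k₀) = orb 0 := hit k₀
  -- nonconstancy
  set R : ℝ := ‖c‖ + ‖orb 0‖ + 2 with hR
  have hnormR : ‖(R : ℂ)‖ = R := by
    rw [Complex.norm_real]
    exact abs_of_pos (by positivity)
  have hbig : p^[k₀] ((R : ℂ)) ≠ orb 0 := by
    have hf_eq : p^[k₀] = (fun z : ℂ => z ^ 2 + c)^[k₀] := by rw [hp]
    have hgrow := (iter_growth c (x := (R : ℂ))
      (by rw [hnormR]; have := norm_nonneg (orb 0); linarith) k₀).2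
    rw [← hf_eq, hnormR] at hgrow
    intro hcontra
    rw [hcontra] at hgrow
    have := norm_nonneg c
    linarith
  have hfar : AnalyticAt ℂ (fun x => p^[k₀] x - orb 0) (orb k₀) :=
    (hfd.analyticAt _).sub analyticAt_const
  rcases hfar.eventually_eq_zero_or_eventually_ne_zero with hcase | hcase
  · exfalso
    have heq : (fun x => p^[k₀] x) =ᶠ[𝓝 (orb k₀)] fun _ => orb 0 :=
      hcase.mono (fun x hx => by simpa [sub_eq_zero] using hx)
    have hEq : Set.EqOn p^[k₀] (fun _ => orb 0) Set.univ :=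
      AnalyticOnNhd.eqOn_of_preconnected_of_eventuallyEq
        (fun x _ => hfd.analyticAt x) analyticOnNhd_const isPreconnected_univ
        (Set.mem_univ (orb k₀)) heq
    exact hbig (hEq (Set.mem_univ _))
  · rw [eventually_nhdsWithin_iff, Metric.eventually_nhds_iff] at hcase
    obtain ⟨ε, hε0, hεsph⟩ := hcase
    set η : ℝ := min (t/2) (ε/2) with hηdef
    have hη0 : 0 < η := lt_min (by positivity) (by positivity)
    have hηt : η ≤ t/2 := min_le_left _ _
    have hsph : ∀ x ∈ Metric.sphere (orb k₀) η, p^[k₀] x ≠ orb 0 := by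
      intro x hx hfx
      have hd : dist x (orb k₀) = η := hx
      have h1 : dist x (orb k₀) < ε := by
        rw [hd]; have := min_le_right (t/2) (ε/2); linarith
      have h2 : x ≠ orb k₀ := by
        intro h; rw [h, dist_self] at hd; linarith
      exact hεsph h1 h2 (by rw [sub_eq_zero]; exact hfx)
    obtain ⟨δ, hδ0, hcomp⟩ := component_small hfd.continuous hη0 hfz hsph
    refine ⟨Metric.ball (orb 0) δ, Metric.isOpen_ball,
      ((convex_ball _ _).isPathConnected (Metric.nonempty_ball.mpr hδ0)).isConnected,
      Metric.mem_ball_self hδ0, k₀, ?_⟩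
    have hmemU : ∀ k, orb k ∈ p^[k] ⁻¹' Metric.ball (orb 0) δ := by
      intro k
      simp only [Set.mem_preimage, hit k]
      exact Metric.mem_ball_self hδ0
    have hprod : ∀ x : ℂ, dist (p x) β = ‖x - β‖ * ‖x + β‖ := by
      intro x
      rw [dist_eq_norm, ← norm_mul]
      congr 1
      rw [hp]
      linear_combination hβc
    have hdouble : ∀ x : ℂ, 2 * ‖β‖ ≤ ‖x - β‖ + ‖x + β‖ := by
      intro x
      have e : (x + β) - (x - β) = 2 * β := by ring
      calc 2 * ‖β‖ = ‖(x + β) - (x - β)‖ := by rw [e, norm_mul]; simp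
        _ ≤ ‖x + β‖ + ‖x - β‖ := norm_sub_le _ _
        _ = ‖x - β‖ + ‖x + β‖ := by ring
    have base : connectedComponentIn (p^[k₀] ⁻¹' Metric.ball (orb 0) δ) (orb k₀) ⊆
        Metric.ball β t := by
      intro x hx
      have h1 : dist x (orb k₀) < η := hcomp hx
      have h2 : dist (orb k₀) β < t/2 :=
        lt_of_lt_of_le (hk₀ k₀ le_rfl) (min_le_right _ _)
      have : dist x β < t := by
        calc dist x β ≤ dist x (orb k₀) + dist (orb k₀) β := dist_triangle _ _ _
          _ < η + t/2 := by linarith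
          _ ≤ t := by linarith
      exact this
    have step : ∀ k, k₀ ≤ k →
        connectedComponentIn (p^[k] ⁻¹' Metric.ball (orb 0) δ) (orb k) ⊆ Metric.ball β t →
        connectedComponentIn (p^[k+1] ⁻¹' Metric.ball (orb 0) δ) (orb (k+1)) ⊆
          Metric.ball β r ∩ Metric.ball β t := by
      intro k hk ih
      set U := Metric.ball (orb 0) δ with hU
      set C := connectedComponentIn (p^[k+1] ⁻¹' U) (orb (k+1)) with hC
      have hCpre : IsPreconnected C := isPreconnected_connectedComponentIn
      have himg : p '' C ⊆ connectedComponentIn (p^[k] ⁻¹' U) (orb k) := by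
        apply IsPreconnected.subset_connectedComponentIn (hCpre.image p hpc.continuousOn)
        · exact ⟨orb (k+1), mem_connectedComponentIn (hmemU (k+1)), horb k⟩
        · rintro y ⟨x, hx, rfl⟩
          have hxC : x ∈ p^[k+1] ⁻¹' U :=
            connectedComponentIn_subset (p^[k+1] ⁻¹' U) (orb (k+1)) hx
          have hxU : p^[k+1] x ∈ U := hxC
          rwa [Function.iterate_succ_apply] at hxU
      have hCt : ∀ x ∈ C, dist (p x) β < t := fun x hx => ih (himg ⟨x, hx, rfl⟩)
      set u := p ⁻¹' Metric.ball β t ∩ Metric.ball β r with hu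
      set v := p ⁻¹' Metric.ball β t ∩ Metric.ball (-β) r with hv
      have hou : IsOpen u := (Metric.isOpen_ball.preimage hpc).inter Metric.isOpen_ball
      have hov : IsOpen v := (Metric.isOpen_ball.preimage hpc).inter Metric.isOpen_ball
      have hdisj : Disjoint u v := by
        rw [Set.disjoint_left]
        rintro x ⟨-, hx1⟩ ⟨-, hx2⟩
        have e1 : ‖x - β‖ < r := by rwa [Metric.mem_ball, dist_eq_norm] at hx1
        have e2 : ‖x + β‖ < r := by
          rw [Metric.mem_ball, dist_eq_norm, sub_neg_eq_add] at hx2; exact hx2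
        have := hdouble x
        linarith
      have hcover : C ⊆ u ∪ v := by
        intro x hx
        have h1 : dist (p x) β < t := hCt x hx
        have h2 : ‖x - β‖ * ‖x + β‖ < t := by rwa [hprod] at h1
        have hpb : x ∈ p ⁻¹' Metric.ball β t := h1
        have hor : ‖x - β‖ < r ∨ ‖x + β‖ < r := by
          by_contra h
          push_neg at h
          nlinarith [h.1, h.2]
        rcases hor with h | h
        · exact Or.inl ⟨hpb, by rwa [Metric.mem_ball, dist_eq_norm]⟩
        · exact Or.inr ⟨hpb, by rw [Metric.mem_ball, dist_eq_norm, sub_neg_eq_add]; exact h⟩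
      have hmemu : orb (k+1) ∈ u := by
        constructor
        · have hk2 := ih (mem_connectedComponentIn (hmemU k))
          simp only [Set.mem_preimage, horb k]
          exact hk2
        · exact lt_of_lt_of_le (hk₀ (k+1) (by omega)) (min_le_left _ _)
      have hCu : C ⊆ u := hCpre.subset_left_of_subset_union hou hov hdisj hcover
        ⟨orb (k+1), mem_connectedComponentIn (hmemU (k+1)), hmemu⟩
      intro x hx
      obtain ⟨hx1, hx2⟩ := hCu hx
      have e1 : ‖x - β‖ * ‖x + β‖ < t := by
        have : dist (p x) β < t := hx1
        rwa [hprod] at this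
      have e2 : ‖x - β‖ < r := by rwa [Metric.mem_ball, dist_eq_norm] at hx2
      have e3 := hdouble x
      have hb1 : 1 ≤ ‖x + β‖ := by linarith
      have e4 : ‖x - β‖ ≤ ‖x - β‖ * ‖x + β‖ :=
        le_mul_of_one_le_right (norm_nonneg _) hb1
      refine ⟨hx2, ?_⟩
      rw [Metric.mem_ball, dist_eq_norm]
      linarith
    have key : ∀ k, k₀ ≤ k →
        connectedComponentIn (p^[k] ⁻¹' Metric.ball (orb 0) δ) (orb k) ⊆ Metric.ball β t := by
      intro k hk
      induction k, hk using Nat.le_induction with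
      | base => exact base
      | succ n hn ih => exact (step n hn ih).trans inter_subset_right
    intro k hk
    have hCr : connectedComponentIn (p^[k+1] ⁻¹' Metric.ball (orb 0) δ) (orb (k+1)) ⊆
        Metric.ball β r := (step k hk (key k hk)).trans inter_subset_left
    intro x hx y hy hxy
    have hx2 : ‖x - β‖ < r := by
      have := hCr hx; rwa [Metric.mem_ball, dist_eq_norm] at this
    have hy2 : ‖y - β‖ < r := by
      have := hCr hy; rwa [Metric.mem_ball, dist_eq_norm] at this
    have hsq : x ^ 2 = y ^ 2 := by
      have h : x ^ 2 + c = y ^ 2 + c := by rw [hp] at hxy; exact hxy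
      exact add_right_cancel h
    have hz : (x - y) * (x + y) = 0 := by linear_combination hsq
    rcases mul_eq_zero.mp hz with h | h
    · exact sub_eq_zero.mp h
    · exfalso
      have hxy0 : x = -y := eq_neg_of_add_eq_zero_left h
      have e : (x - β) + (y - β) = -(2 * β) + (x + y) := by ring
      have e2 : (x - β) + (y - β) = -(2 * β) := by rw [e, h, add_zero]
      have : 2 * ‖β‖ ≤ ‖x - β‖ + ‖y - β‖ := by
        calc 2 * ‖β‖ = ‖-(2 * β)‖ := by rw [norm_neg, norm_mul]; simp
          _ = ‖(x - β) + (y - β)‖ := by rw [e2]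
          _ ≤ ‖x - β‖ + ‖y - β‖ := norm_add_le _ _
      linarith

/-- **The Koenigs leaf of a repelling fixed point is parabolic.** Let `p(z) = z² + c` have
connected Julia set, let `β` be a repelling fixed point with multiplier `λ = p'(β)`,
`|λ| > 1`, and Koenigs linearization `φ` (`φ(0) = β`, `φ'(0) = 1`, `p∘φ(z) = φ(λz)`).
Then `Φ : z ↦ (φ(z), φ(z/λ), φ(z/λ²), …)` is a well-defined continuous injection
`ℂ → N_p` whose image is a path-connected set of regular backward orbits containing the
invariant lift of `β`; in particular the leaf of the invariant lift of `β` is a parabolic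
Riemann surface (the injective continuous image of `ℂ`). -/
theorem koenigs_leaf_parabolic (c β lam : ℂ) (p : ℂ → ℂ) (hp : p = fun z => z ^ 2 + c)
    (hconn : IsConnected (frontier (filledJulia p)))
    (hfix : p β = β) (hlam : lam = deriv p β) (hrep : 1 < ‖lam‖)
    (φ : ℂ → ℂ) (hφ : Differentiable ℂ φ) (hφ0 : φ 0 = β) (hφ' : deriv φ 0 = 1)
    (hfe : ∀ z, p (φ z) = φ (lam * z)) :
    ∃ Φ : ℂ → NatExt p,
      (∀ z k, (Φ z).1 k = φ (z / lam ^ k)) ∧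
      Continuous Φ ∧ Function.Injective Φ ∧ IsPathConnected (Set.range Φ) ∧
      (∀ z, IsRegularOrbit p ((Φ z).1)) ∧ (Φ 0).1 = fun _ => β := by
  have hlam0 : lam ≠ 0 := by
    intro h
    rw [h, norm_zero] at hrep
    linarith
  have hlam2 : lam = 2 * β := by
    rw [hlam, hp]
    have : deriv (fun z : ℂ => z ^ 2 + c) β = 2 * β := by
      rw [deriv_add_const]
      simp
    rw [this]
  have hβ : 1 / 2 < ‖β‖ := by
    have : ‖lam‖ = 2 * ‖β‖ := by rw [hlam2, norm_mul]; simp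
    rw [this] at hrep
    linarith
  have hdiv : ∀ (z : ℂ) (k : ℕ), lam * (z / lam ^ (k + 1)) = z / lam ^ k := by
    intro z k
    rw [pow_succ]
    field_simp
  have htend0 : ∀ z : ℂ, Tendsto (fun k : ℕ => z / lam ^ k) atTop (𝓝 0) := by
    intro z
    have h1 : ‖lam⁻¹‖ < 1 := by
      rw [norm_inv]
      rw [inv_lt_one_iff₀]
      right; exact hrep
    have h2 : Tendsto (fun k : ℕ => lam⁻¹ ^ k) atTop (𝓝 0) :=
      tendsto_pow_atTop_nhds_zero_of_norm_lt_one h1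
    have h3 := h2.const_mul z
    rw [mul_zero] at h3
    refine h3.congr (fun k => ?_)
    rw [div_eq_mul_inv, inv_pow]
  refine ⟨fun z => ⟨fun k => φ (z / lam ^ k), fun k => by rw [hfe, hdiv]⟩,
    fun z k => rfl, ?_, ?_, ?_, ?_, ?_⟩
  · -- continuity
    apply Continuous.subtype_mk
    exact continuous_pi fun k => hφ.continuous.comp (continuous_id.div_const _)
  · -- injectivity
    intro z w h
    have hcoord : ∀ k, φ (z / lam ^ k) = φ (w / lam ^ k) := by
      intro k
      have := congrArg Subtype.val h
      exact congrFun this k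
    obtain ⟨pφ, hpφ⟩ := hφ.analyticAt 0
    have hd1 : HasStrictDerivAt φ 1 0 := by
      have h1 := hpφ.hasStrictDerivAt
      have h2 := hpφ.deriv
      rw [← h2, hφ'] at h1
      exact h1
    have hfstrict := hd1.hasStrictFDerivAt_equiv one_ne_zero
    have hev := hfstrict.eventually_left_inverse
    rw [Metric.eventually_nhds_iff] at hev
    obtain ⟨ε, hε0, hg⟩ := hev
    obtain ⟨K1, hK1⟩ := Metric.tendsto_atTop.mp (htend0 z) ε hε0
    obtain ⟨K2, hK2⟩ := Metric.tendsto_atTop.mp (htend0 w) ε hε0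
    set K := max K1 K2 with hK
    have e1 := hg (hK1 K (le_max_left _ _))
    have e2 := hg (hK2 K (le_max_right _ _))
    have heq : z / lam ^ K = w / lam ^ K := by
      rw [← e1, ← e2, hcoord K]
    have := congrArg (· * lam ^ K) heq
    simpa [div_mul_cancel₀, pow_ne_zero K hlam0] using this
  · -- path connected
    have hcont : Continuous (fun z : ℂ =>
        (⟨fun k => φ (z / lam ^ k), fun k => by rw [hfe, hdiv]⟩ : NatExt p)) := by
      apply Continuous.subtype_mk
      exact continuous_pi fun k => hφ.continuous.comp (continuous_id.div_const _)
    have huniv : IsPathConnected (Set.univ : Set ℂ) :=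
      pathConnectedSpace_iff_univ.mp inferInstance
    have := huniv.image hcont
    rwa [Set.image_univ] at this
  · -- regularity
    intro z
    apply regular_aux hp hfix hβ
    · intro k
      show p (φ (z / lam ^ (k + 1))) = φ (z / lam ^ k)
      rw [hfe, hdiv]
    · have h1 : Tendsto φ (𝓝 0) (𝓝 β) := by
        rw [← hφ0]
        exact hφ.continuous.tendsto 0
      exact h1.comp (htend0 z)
  · -- invariant lift
    funext k
    show φ (0 / lam ^ k) = β
    rw [zero_div, hφ0]
end
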